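/- arXiv:1508.04206 — 6 statements merged into one kernel-verified Lean document; each statement's English description precedes it below -/
import Mathlib

section
/- If A is an n×n real Hurwitz matrix, then there exist constants k > 0 and λ > 0 such that ‖e^{At}‖ ≤ k e^{−λ t} for all t ≥ 0. -/
open Matrix

open Pointwise
open scoped ENNReal NNReal

attribute [local instance] Matrix.linftyOpNormedAddCommGroup Matrix.linftyOpNormedRing
  Matrix.linftyOpNormedAlgebra

def IsHurwitz {n : ℕ} (A : Matrix (Fin n) (Fin n) ℝ) : Prop :=
  ∀ z ∈ spectrum ℂ (A.map Complex.ofReal), z.re < 0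

namespace HurwitzAux

open NormedSpace Module Module.End Nat

noncomputable instance matCompleteR {n : ℕ} : CompleteSpace (Matrix (Fin n) (Fin n) ℝ) :=
  FiniteDimensional.complete ℝ _

noncomputable instance matCompleteC {n : ℕ} : CompleteSpace (Matrix (Fin n) (Fin n) ℂ) :=
  FiniteDimensional.complete ℂ _

variable {n : ℕ}

theorem norm_map_ofReal (M : Matrix (Fin n) (Fin n) ℝ) :
    ‖M.map Complex.ofReal‖ = ‖M‖ := by
  rw [Matrix.linfty_opNorm_def, Matrix.linfty_opNorm_def]
  congr 1
  congr 1
  funext i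
  congr 1
  funext j
  simp [Matrix.map_apply]

/-- entrywise `ofReal` as a linear map, for continuity -/
noncomputable def mapRCLin : Matrix (Fin n) (Fin n) ℝ →ₗ[ℝ] Matrix (Fin n) (Fin n) ℂ where
  toFun M := M.map Complex.ofReal
  map_add' M N := by ext i j; simp [Matrix.map_apply]
  map_smul' c M := by ext i j; simp [Matrix.map_apply]

theorem continuous_mapRC :
    Continuous fun M : Matrix (Fin n) (Fin n) ℝ => M.map Complex.ofReal :=
  (mapRCLin (n := n)).continuous_of_finiteDimensional

theorem map_ofReal_exp (M : Matrix (Fin n) (Fin n) ℝ) :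
    (NormedSpace.exp M).map Complex.ofReal = NormedSpace.exp (M.map Complex.ofReal) := by
  have h := map_exp (Complex.ofRealHom.mapMatrix :
      Matrix (Fin n) (Fin n) ℝ →+* Matrix (Fin n) (Fin n) ℂ) continuous_mapRC M
  simp only [RingHom.mapMatrix_apply] at h
  rw [show (Complex.ofRealHom : ℝ → ℂ) = Complex.ofReal from rfl] at h
  exact h

theorem mulVec_exp_of_eigen (B : Matrix (Fin n) (Fin n) ℂ) {v : Fin n → ℂ} {lam : ℂ}
    (hv : B.mulVec v = lam • v) :
    (NormedSpace.exp B).mulVec v = Complex.exp lam • v := by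
  have hpow : ∀ k : ℕ, (B ^ k).mulVec v = lam ^ k • v := by
    intro k
    induction k with
    | zero => simp
    | succ k ih =>
        rw [pow_succ, ← Matrix.mulVec_mulVec, hv, Matrix.mulVec_smul, ih, smul_smul,
          pow_succ, mul_comm]
  let Φ : Matrix (Fin n) (Fin n) ℂ →ₗ[ℂ] (Fin n → ℂ) :=
    { toFun := fun M => M.mulVec v
      map_add' := fun M N => Matrix.add_mulVec M N v
      map_smul' := fun c M => (Matrix.smul_mulVec c M v) }
  have hΦ : Continuous Φ := Φ.continuous_of_finiteDimensional
  have hsum : Summable fun k : ℕ => (k !⁻¹ : ℂ) • B ^ k :=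
    NormedSpace.expSeries_summable' B
  have h1 : (NormedSpace.exp B).mulVec v
      = ∑' k : ℕ, (k !⁻¹ : ℂ) • (lam ^ k • v) := by
    have h2 := (hsum.hasSum.map Φ hΦ).tsum_eq
    simp only [Function.comp] at h2
    have h3 : ∀ k : ℕ, Φ ((k !⁻¹ : ℂ) • B ^ k) = (k !⁻¹ : ℂ) • (lam ^ k • v) := by
      intro k
      rw [_root_.map_smul]
      simp only [Φ, LinearMap.coe_mk, AddHom.coe_mk, hpow]
    calc (NormedSpace.exp B).mulVec v = Φ (∑' k : ℕ, (k !⁻¹ : ℂ) • B ^ k) := by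
          rw [NormedSpace.exp_eq_tsum ℂ]; rfl
      _ = ∑' k : ℕ, Φ ((k !⁻¹ : ℂ) • B ^ k) := h2.symm
      _ = ∑' k : ℕ, (k !⁻¹ : ℂ) • (lam ^ k • v) := tsum_congr h3
  have hsum2 : Summable fun k : ℕ => (k !⁻¹ : ℂ) • lam ^ k :=
    NormedSpace.expSeries_summable' lam
  have h4 : ∀ k : ℕ, (k !⁻¹ : ℂ) • (lam ^ k • v) = ((k !⁻¹ : ℂ) • lam ^ k) • v := by
    intro k; rw [smul_smul, smul_eq_mul]
  rw [h1]
  calc ∑' k : ℕ, (k !⁻¹ : ℂ) • (lam ^ k • v)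
      = ∑' k : ℕ, ((k !⁻¹ : ℂ) • lam ^ k) • v := tsum_congr h4
    _ = (∑' k : ℕ, (k !⁻¹ : ℂ) • lam ^ k) • v := hsum2.tsum_smul_const v
    _ = Complex.exp lam • v := by
        have h5 : Complex.exp lam = ∑' k : ℕ, (k !⁻¹ : ℂ) • lam ^ k := by
          rw [Complex.exp_eq_exp_ℂ, NormedSpace.exp_eq_tsum ℂ]
        rw [h5]

theorem spectrum_exp_subset (B : Matrix (Fin n) (Fin n) ℂ) {z : ℂ}
    (hz : z ∈ spectrum ℂ (NormedSpace.exp B)) :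
    ∃ lam ∈ spectrum ℂ B, z = Complex.exp lam := by
  classical
  set E := NormedSpace.exp B with hE
  let f : Module.End ℂ (Fin n → ℂ) := Matrix.toLinAlgEquiv' B
  let g : Module.End ℂ (Fin n → ℂ) := Matrix.toLinAlgEquiv' E
  have hzg : g.HasEigenvalue z := by
    rw [Module.End.hasEigenvalue_iff_mem_spectrum, AlgEquiv.spectrum_eq]
    exact hz
  set W := g.eigenspace z with hW
  have hWne : W ≠ ⊥ := hzg
  haveI : Nontrivial W := Submodule.nontrivial_iff_ne_bot.mpr hWne
  have hcomm : Commute B E := (Commute.refl B).exp_right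
  have hcommEnd : g * f = f * g := by
    simp only [f, g, ← _root_.map_mul, hcomm.eq]
  have hinv : ∀ x ∈ W, f x ∈ W := by
    intro x hx
    rw [hW, Module.End.mem_eigenspace_iff] at hx ⊢
    have : g (f x) = f (g x) := by
      have := congrArg (fun h : Module.End ℂ (Fin n → ℂ) => h x) hcommEnd
      simpa using this
    rw [this, hx, _root_.map_smul]
  let f' : Module.End ℂ W := f.restrict hinv
  obtain ⟨μ, hμ⟩ := Module.End.exists_eigenvalue f'
  obtain ⟨v, hv⟩ := hμ.exists_hasEigenvector
  have hv0 : (v : Fin n → ℂ) ≠ 0 := fun h => hv.right (Subtype.coe_injective (by simpa using h))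
  have hfv : f (v : Fin n → ℂ) = μ • (v : Fin n → ℂ) := by
    have := hv.apply_eq_smul
    have h2 := congrArg (Subtype.val) this
    rw [LinearMap.restrict_coe_apply] at h2
    simpa using h2
  have hmulvec : B.mulVec (v : Fin n → ℂ) = μ • (v : Fin n → ℂ) := by
    simpa [f, Matrix.toLinAlgEquiv'_apply] using hfv
  have hμspec : μ ∈ spectrum ℂ B := by
    rw [← AlgEquiv.spectrum_eq (Matrix.toLinAlgEquiv' (R := ℂ) (n := Fin n)) B,
      ← Module.End.hasEigenvalue_iff_mem_spectrum]
    exact Module.End.hasEigenvalue_of_hasEigenvector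
      ⟨Module.End.mem_eigenspace_iff.mpr hfv, hv0⟩
  have hEv : E.mulVec (v : Fin n → ℂ) = Complex.exp μ • (v : Fin n → ℂ) :=
    mulVec_exp_of_eigen B hmulvec
  have hEv' : E.mulVec (v : Fin n → ℂ) = z • (v : Fin n → ℂ) := by
    have hvW : g (v : Fin n → ℂ) = z • (v : Fin n → ℂ) :=
      Module.End.mem_eigenspace_iff.mp v.2
    simpa [g, Matrix.toLinAlgEquiv'_apply] using hvW
  refine ⟨μ, hμspec, ?_⟩
  have : z • (v : Fin n → ℂ) = Complex.exp μ • (v : Fin n → ℂ) := by rw [← hEv, ← hEv']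
  exact (smul_left_injective ℂ hv0 this)

end HurwitzAux

/-- If `A` is Hurwitz then `‖exp (t A)‖ ≤ k e^{-λ t}` for some `k, λ > 0`. -/
theorem hurwitz_exp_decay {n : ℕ} (A : Matrix (Fin n) (Fin n) ℝ)
    (hA : IsHurwitz A) :
    ∃ k > (0 : ℝ), ∃ lam > (0 : ℝ), ∀ t : ℝ, 0 ≤ t →
      ‖NormedSpace.exp (t • A)‖ ≤ k * Real.exp (-lam * t) := by
  classical
  rcases Nat.eq_zero_or_pos n with hn | hn
  · subst hn
    refine ⟨1, one_pos, 1, one_pos, fun t ht => ?_⟩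
    have h0 : NormedSpace.exp (t • A) = 0 := by ext i j; exact i.elim0
    rw [h0, norm_zero]
    positivity
  haveI : Nonempty (Fin n) := Fin.pos_iff_nonempty.mp hn
  set C := A.map Complex.ofReal with hC
  have hSne : (spectrum ℂ C).Nonempty := spectrum.nonempty C
  have hScomp : IsCompact (spectrum ℂ C) := spectrum.isCompact C
  obtain ⟨α, hαmem, hαub⟩ :=
    (hScomp.image Complex.continuous_re).exists_isGreatest (hSne.image _)
  have hαneg : α < 0 := by
    obtain ⟨z, hzS, hzre⟩ := hαmem
    rw [← hzre]; exact hA z hzS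
  set μ : ℝ := -α / 2 with hμ
  have hμpos : 0 < μ := by rw [hμ]; linarith
  have hRe : ∀ lam ∈ spectrum ℂ C, lam.re ≤ -(2 * μ) := by
    intro lam hlam
    have := hαub (Set.mem_image_of_mem _ hlam)
    rw [hμ] at *; linarith
  set Br : Matrix (Fin n) (Fin n) ℝ := μ • 1 + A with hBr
  set Bc : Matrix (Fin n) (Fin n) ℂ :=
    algebraMap ℂ (Matrix (Fin n) (Fin n) ℂ) (μ : ℂ) + C with hBc
  have hmapBr : Br.map Complex.ofReal = Bc := by
    ext i j
    simp only [hBr, hBc, Matrix.map_apply, Matrix.add_apply, Matrix.smul_apply,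
      Matrix.one_apply, Matrix.algebraMap_matrix_apply, hC, smul_eq_mul,
      Algebra.algebraMap_self, RingHom.id_apply]
    split_ifs <;> push_cast <;> ring
  have hspecBc : spectrum ℂ Bc = {(μ : ℂ)} + spectrum ℂ C :=
    (spectrum.singleton_add_eq C (μ : ℂ)).symm
  set E := NormedSpace.exp Bc with hE
  have hEspec : ∀ z ∈ spectrum ℂ E, ‖z‖₊ < 1 := by
    intro z hz
    obtain ⟨lam, hlam, rfl⟩ := HurwitzAux.spectrum_exp_subset Bc hz
    rw [hspecBc] at hlam
    obtain ⟨a, ha, b, hb, rfl⟩ := Set.mem_add.mp hlam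
    rw [Set.mem_singleton_iff] at ha
    subst ha
    have hbre : b.re ≤ -(2 * μ) := hRe b hb
    have hre : ((μ : ℂ) + b).re < 0 := by
      simp only [Complex.add_re, Complex.ofReal_re]
      linarith
    have hnorm : ‖Complex.exp ((μ : ℂ) + b)‖ < 1 := by
      rw [Complex.norm_exp]
      exact Real.exp_lt_one_iff.mpr hre
    exact_mod_cast hnorm
  have hρ : spectralRadius ℂ E < 1 := by
    have h := spectrum.spectralRadius_lt_of_forall_lt_of_nonempty
      (spectrum.nonempty E) (r := 1) hEspec
    simpa using h
  have hev : ∀ᶠ m : ℕ in Filter.atTop,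
      ((‖E ^ m‖₊ : ℝ≥0∞) ^ (1 / (m : ℝ)) < 1 ∧ 1 ≤ m) :=
    ((spectrum.pow_nnnorm_pow_one_div_tendsto_nhds_spectralRadius E).eventually_lt_const
      hρ).and (Filter.eventually_ge_atTop 1)
  obtain ⟨m, hmlt, hm1⟩ := hev.exists
  have hmR : (0 : ℝ) < m := by exact_mod_cast hm1
  have hEm : ‖E ^ m‖ < 1 := by
    have h := ENNReal.rpow_lt_rpow hmlt hmR
    rw [ENNReal.one_rpow, ← ENNReal.rpow_mul, one_div, inv_mul_cancel₀ hmR.ne',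
      ENNReal.rpow_one] at h
    have := ENNReal.coe_lt_one_iff.mp h
    exact_mod_cast this
  have hc : ‖NormedSpace.exp ((m : ℝ) • Br)‖ < 1 := by
    have h1 : ((m : ℝ) • Br).map Complex.ofReal = (m : ℝ) • Bc := by
      rw [← hmapBr]; ext i j
      simp only [Matrix.map_apply, Matrix.smul_apply, smul_eq_mul, Complex.real_smul]
      push_cast; ring
    have h2 : (NormedSpace.exp ((m : ℝ) • Br)).map Complex.ofReal = E ^ m := by
      rw [HurwitzAux.map_ofReal_exp, h1, Nat.cast_smul_eq_nsmul, Matrix.exp_nsmul]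
    rw [← HurwitzAux.norm_map_ofReal, h2]
    exact hEm
  have hcontf : ContinuousOn (fun s : ℝ => NormedSpace.exp (s • Br))
      (Set.Icc (0 : ℝ) (m : ℝ)) := by
    apply Continuous.continuousOn
    exact NormedSpace.exp_continuous.comp (continuous_id.smul continuous_const)
  obtain ⟨K, hK⟩ :=
    (isCompact_Icc (a := (0 : ℝ)) (b := (m : ℝ))).exists_bound_of_continuousOn hcontf
  have hK0 : 0 ≤ K := le_trans (norm_nonneg _) (hK 0 ⟨le_rfl, hmR.le⟩)
  have hbound : ∀ t : ℝ, 0 ≤ t → ‖NormedSpace.exp (t • Br)‖ ≤ K := by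
    intro t ht
    set q := ⌊t / (m : ℝ)⌋₊ with hq
    have hq1 : (q : ℝ) * m ≤ t := by
      have h := Nat.floor_le (div_nonneg ht hmR.le)
      calc (q : ℝ) * m ≤ t / m * m := mul_le_mul_of_nonneg_right h hmR.le
        _ = t := div_mul_cancel₀ t hmR.ne'
    have hq2 : t - q * m ≤ m := by
      have h := Nat.lt_floor_add_one (t / (m : ℝ))
      have h2 : t < ((q : ℝ) + 1) * m := by
        have := mul_lt_mul_of_pos_right h hmR
        rwa [div_mul_cancel₀ t hmR.ne'] at this
      nlinarith
    set s := t - q * m with hs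
    have hs0 : 0 ≤ s := by rw [hs]; linarith
    have hdecomp : NormedSpace.exp (t • Br)
        = NormedSpace.exp (s • Br) * (NormedSpace.exp ((m : ℝ) • Br)) ^ q := by
      have h1 : t • Br = s • Br + ((q : ℝ) * (m : ℝ)) • Br := by
        rw [← add_smul]; congr 1; rw [hs]; ring
      rw [h1, Matrix.exp_add_of_commute _ _ (((Commute.refl Br).smul_left s).smul_right _)]
      congr 1
      have h2 : ((q : ℝ) * (m : ℝ)) • Br = q • ((m : ℝ) • Br) := by
        rw [← smul_smul, Nat.cast_smul_eq_nsmul]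
      rw [h2, Matrix.exp_nsmul]
    rw [hdecomp]
    have hpq : ‖(NormedSpace.exp ((m : ℝ) • Br)) ^ q‖ ≤ 1 := by
      rcases Nat.eq_zero_or_pos q with hq0 | hq0
      · rw [hq0, pow_zero]
        have : ‖(1 : Matrix (Fin n) (Fin n) ℝ)‖ = 1 := norm_one
        rw [this]
      · calc ‖(NormedSpace.exp ((m : ℝ) • Br)) ^ q‖
            ≤ ‖NormedSpace.exp ((m : ℝ) • Br)‖ ^ q := norm_pow_le' _ hq0
          _ ≤ 1 := pow_le_one₀ (norm_nonneg _) hc.le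
    calc ‖NormedSpace.exp (s • Br) * (NormedSpace.exp ((m : ℝ) • Br)) ^ q‖
        ≤ ‖NormedSpace.exp (s • Br)‖ * ‖(NormedSpace.exp ((m : ℝ) • Br)) ^ q‖ :=
          norm_mul_le _ _
      _ ≤ K * 1 := by
          refine mul_le_mul (hK s ⟨hs0, by linarith⟩) hpq (norm_nonneg _) hK0
      _ = K := mul_one K
  refine ⟨K + 1, by linarith, μ, hμpos, fun t ht => ?_⟩
  have hsplit : NormedSpace.exp (t • A)
      = NormedSpace.exp (t • Br) * (Real.exp (-(t * μ)) • 1) := by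
    have h1 : t • A = t • Br + (-(t * μ)) • (1 : Matrix (Fin n) (Fin n) ℝ) := by
      rw [hBr]; module
    rw [h1, Matrix.exp_add_of_commute _ _ ((Commute.one_right _).smul_right _)]
    congr 1
    have h2 : (-(t * μ)) • (1 : Matrix (Fin n) (Fin n) ℝ)
        = algebraMap ℝ (Matrix (Fin n) (Fin n) ℝ) (-(t * μ)) :=
      (Algebra.algebraMap_eq_smul_one _).symm
    rw [h2, Real.exp_eq_exp_ℝ, ← Algebra.algebraMap_eq_smul_one]
    exact (NormedSpace.algebraMap_exp_comm (𝔸 := Matrix (Fin n) (Fin n) ℝ) (-(t * μ))).symm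
  rw [hsplit, mul_smul_comm, mul_one, norm_smul, Real.norm_eq_abs,
    abs_of_pos (Real.exp_pos _)]
  have hfin : Real.exp (-(t * μ)) * ‖NormedSpace.exp (t • Br)‖
      ≤ Real.exp (-(t * μ)) * K :=
    mul_le_mul_of_nonneg_left (hbound t ht) (Real.exp_pos _).le
  have heq : -(t * μ) = -μ * t := by ring
  rw [heq] at hfin ⊢
  have hep := Real.exp_pos (-μ * t)
  nlinarith
end

section
/- Consider the linear plant ẋ = A x + B u + E v, e = C x + D u + F v with exosystem v̇ = S v. Suppose K₁ is such that A + B K₁ is Hurwitz, and (X, U) solve the regulator equations X S = A X + B U + E and 0 = C X + D U + F. Then under the full-information control u = K₁ x + K₂ v with K₂ = U − K₁ X, the error coordinate x̄ = x − X v satisfies ẋ̄ = (A + B K₁) x̄ and e = (C + D K₁) x̄, and hence e(t) → 0 as t → ∞ for every initial condition. -/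
open Matrix Filter Topology

namespace OutputRegAux

open NormedSpace

section Aux

attribute [local instance] Matrix.linftyOpSemiNormedRing Matrix.linftyOpNormedRing
  Matrix.linftyOpNormedAlgebra

variable {n : ℕ}

/-- `mulVec` by a fixed vector, as a continuous `ℝ`-linear map on matrices. -/
noncomputable def mulVecCLM (w : Fin n → ℂ) :
    Matrix (Fin n) (Fin n) ℂ →L[ℝ] (Fin n → ℂ) :=
  LinearMap.toContinuousLinearMap
  { toFun := fun F => F.mulVec w
    map_add' := fun F G => Matrix.add_mulVec F G w
    map_smul' := fun r F => by
      ext i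
      simp [Matrix.mulVec, dotProduct, Finset.smul_sum, smul_mul_assoc, mul_assoc] }

@[simp] lemma mulVecCLM_apply (w : Fin n → ℂ) (F : Matrix (Fin n) (Fin n) ℂ) :
    mulVecCLM w F = F.mulVec w := rfl

lemma exp_smul_one (c : ℂ) :
    exp (c • (1 : Matrix (Fin n) (Fin n) ℂ)) = Complex.exp c • 1 := by
  have h1 : c • (1 : Matrix (Fin n) (Fin n) ℂ) = algebraMap ℂ _ c :=
    (Algebra.algebraMap_eq_smul_one c).symm
  have h2 : Complex.exp c • (1 : Matrix (Fin n) (Fin n) ℂ) = algebraMap ℂ _ (Complex.exp c) :=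
    (Algebra.algebraMap_eq_smul_one _).symm
  rw [h1, h2]
  have := map_exp ((Algebra.ofId ℂ (Matrix (Fin n) (Fin n) ℂ)).restrictScalars ℝ)
    (continuous_algebraMap ℂ _) c
  simp only [AlgHom.coe_restrictScalars', Algebra.ofId_apply] at this
  refine this.symm.trans ?_
  congr 1
  rw [Complex.exp_eq_exp_ℂ]

lemma tendsto_aux_scalar {μ : ℂ} (hμ : μ.re < 0) (j : ℕ) :
    Tendsto (fun t : ℝ => ((t ^ j / j.factorial : ℝ) : ℂ) * Complex.exp (t • μ))
      atTop (𝓝 0) := by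
  set b : ℝ := -μ.re with hb
  have hb0 : 0 < b := by simpa [hb] using hμ
  have key : Tendsto
      (fun t : ℝ => ((b * t) ^ j * Real.exp (-(b * t))) * ((j.factorial : ℝ)⁻¹ / b ^ j))
      atTop (𝓝 0) := by
    have h1 : Tendsto (fun t : ℝ => b * t) atTop atTop :=
      Tendsto.const_mul_atTop hb0 tendsto_id
    have h2 := (Real.tendsto_pow_mul_exp_neg_atTop_nhds_zero j).comp h1
    simpa using h2.mul_const _
  rw [tendsto_zero_iff_norm_tendsto_zero]
  apply squeeze_zero_norm' _ key
  filter_upwards [eventually_ge_atTop (0 : ℝ)] with t ht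
  have habs : ‖((t ^ j / j.factorial : ℝ) : ℂ) * Complex.exp (t • μ)‖
      = (t ^ j / j.factorial) * Real.exp (t * μ.re) := by
    rw [norm_mul, Complex.norm_exp]
    have : ((t : ℝ) • μ).re = t * μ.re := by simp [Complex.smul_re]
    rw [this, Complex.norm_real, Real.norm_eq_abs, abs_of_nonneg (by positivity)]
  rw [norm_norm, habs]
  have : (b * t) ^ j * Real.exp (-(b * t)) * ((j.factorial : ℝ)⁻¹ / b ^ j)
      = t ^ j / j.factorial * Real.exp (t * μ.re) := by
    rw [mul_pow]
    have : -(b * t) = t * μ.re := by rw [hb]; ring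
    rw [this]
    field_simp
  rw [this]

theorem tendsto_exp_smul_mulVec (M : Matrix (Fin n) (Fin n) ℂ)
    (hM : ∀ z ∈ spectrum ℂ M, z.re < 0) (w : Fin n → ℂ) :
    Tendsto (fun t : ℝ => (exp (t • M)).mulVec w) atTop (𝓝 0) := by
  set f : Module.End ℂ (Fin n → ℂ) := Matrix.toLinAlgEquiv' M with hf
  let P : Submodule ℂ (Fin n → ℂ) :=
  { carrier := {w | Tendsto (fun t : ℝ => (exp (t • M)).mulVec w) atTop (𝓝 0)}
    add_mem' := fun {a b} ha hb => by
      simpa [Matrix.mulVec_add] using Tendsto.add ha hb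
    zero_mem' := by
      simpa [Matrix.mulVec_zero] using (tendsto_const_nhds :
        Tendsto (fun _ : ℝ => (0 : Fin n → ℂ)) atTop _)
    smul_mem' := fun c w hw => by
      simpa [Matrix.mulVec_smul] using hw.const_smul c }
  suffices hP : ∀ μ : ℂ, f.maxGenEigenspace μ ≤ P by
    have htop := Module.End.iSup_maxGenEigenspace_eq_top f
    have hw : w ∈ (⊤ : Submodule ℂ (Fin n → ℂ)) := trivial
    rw [← htop] at hw
    exact iSup_le hP hw
  intro μ w hw
  rw [Module.End.mem_maxGenEigenspace] at hw
  obtain ⟨k, hk⟩ := hw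
  by_cases hw0 : w = 0
  · subst hw0
    simpa [Matrix.mulVec_zero] using (tendsto_const_nhds :
      Tendsto (fun _ : ℝ => (0 : Fin n → ℂ)) atTop _)
  have hμ : μ.re < 0 := by
    apply hM
    rw [← AlgEquiv.spectrum_eq (Matrix.toLinAlgEquiv' :
      Matrix (Fin n) (Fin n) ℂ ≃ₐ[ℂ] _) M]
    rw [← Module.End.hasEigenvalue_iff_mem_spectrum]
    apply Module.End.hasEigenvalue_of_hasGenEigenvalue (k := k)
    intro hbot
    rw [Submodule.eq_bot_iff] at hbot
    exact hw0 (hbot w (by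
      rw [Module.End.mem_genEigenspace_nat, LinearMap.mem_ker]; exact hk))
  set N : Matrix (Fin n) (Fin n) ℂ := M - μ • 1 with hN
  have hker : (N ^ k).mulVec w = 0 := by
    have h1 : Matrix.toLinAlgEquiv' (N ^ k) = (f - μ • 1) ^ k := by
      rw [map_pow, map_sub, _root_.map_smul, _root_.map_one, ← hf]
    have h2 : (N ^ k).mulVec w = (Matrix.toLinAlgEquiv' (N ^ k)) w :=
      (Matrix.toLinAlgEquiv'_apply _ _).symm
    rw [h2, h1]; exact hk
  have hNj : ∀ j, k ≤ j → (N ^ j).mulVec w = 0 := by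
    intro j hj
    rw [← Nat.sub_add_cancel hj, pow_add, ← Matrix.mulVec_mulVec, hker, Matrix.mulVec_zero]
  have hformula : ∀ t : ℝ, (exp (t • M)).mulVec w
      = ∑ j ∈ Finset.range k,
          (Complex.exp (t • μ) * ((t ^ j / j.factorial : ℝ) : ℂ)) • (N ^ j).mulVec w := by
    intro t
    have hMsplit : t • M = (t • μ) • (1 : Matrix (Fin n) (Fin n) ℂ) + t • N := by
      rw [hN, smul_sub, smul_assoc]
      abel
    have hcomm : Commute ((t • μ) • (1 : Matrix (Fin n) (Fin n) ℂ)) (t • N) :=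
      (Commute.one_left (t • N)).smul_left (t • μ)
    rw [hMsplit, Matrix.exp_add_of_commute _ _ hcomm, exp_smul_one, smul_mul_assoc, one_mul,
      Matrix.smul_mulVec]
    have hexpN : (exp (t • N)).mulVec w
        = ∑ j ∈ Finset.range k, ((j.factorial : ℝ)⁻¹ * t ^ j) • (N ^ j).mulVec w := by
      have hsum : (exp (t • N)).mulVec w
          = ∑' j : ℕ, ((j.factorial : ℝ)⁻¹ • ((t • N) ^ j)).mulVec w := by
        rw [← mulVecCLM_apply w, exp_eq_tsum ℝ,
          (mulVecCLM w).map_tsum (expSeries_summable' (𝕂 := ℝ) (t • N))]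
        rfl
      rw [hsum]
      have hterm : ∀ j : ℕ, ((j.factorial : ℝ)⁻¹ • ((t • N) ^ j)).mulVec w
          = ((j.factorial : ℝ)⁻¹ * t ^ j) • (N ^ j).mulVec w := by
        intro j
        rw [smul_pow, smul_smul, Matrix.smul_mulVec]
      rw [tsum_congr hterm]
      apply tsum_eq_sum
      intro j hj
      have hkj : k ≤ j := Nat.le_of_not_lt (by simpa [Finset.mem_range] using hj)
      rw [hNj j hkj, smul_zero]
    rw [hexpN, Finset.smul_sum]
    apply Finset.sum_congr rfl
    intro j _
    rw [← algebraMap_smul ℂ (((j.factorial : ℝ))⁻¹ * t ^ j) ((N ^ j).mulVec w), smul_smul]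
    congr 1
    rw [Complex.coe_algebraMap]
    push_cast
    ring
  show Tendsto (fun t : ℝ => (exp (t • M)).mulVec w) atTop (𝓝 0)
  rw [show (fun t : ℝ => (exp (t • M)).mulVec w) = fun t => ∑ j ∈ Finset.range k,
      (Complex.exp (t • μ) * ((t ^ j / j.factorial : ℝ) : ℂ)) • (N ^ j).mulVec w
    from funext hformula]
  have : (0 : Fin n → ℂ) = ∑ j ∈ Finset.range k, (0 : Fin n → ℂ) := by simp
  rw [this]
  apply tendsto_finset_sum
  intro j _
  have hs : Tendsto (fun t : ℝ => Complex.exp (t • μ) * ((t ^ j / j.factorial : ℝ) : ℂ))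
      atTop (𝓝 0) := by
    have := tendsto_aux_scalar hμ j
    simpa [mul_comm] using this
  simpa using hs.smul_const ((N ^ j).mulVec w)

/-- Entry of a matrix, as a continuous `ℝ`-linear map. -/
noncomputable def entryCLM (i j : Fin n) : Matrix (Fin n) (Fin n) ℂ →L[ℝ] ℂ :=
  LinearMap.toContinuousLinearMap
  { toFun := fun F => F i j
    map_add' := fun _ _ => rfl
    map_smul' := fun _ _ => rfl }

@[simp] lemma entryCLM_apply (i j : Fin n) (F : Matrix (Fin n) (Fin n) ℂ) :
    entryCLM i j F = F i j := rfl

lemma hasDerivAt_of_components {k : ℕ} {𝔽 : Type*} [NormedAddCommGroup 𝔽]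
    [NormedSpace ℝ 𝔽] {f : ℝ → Fin k → 𝔽} {f' : Fin k → 𝔽} {t : ℝ}
    (h : ∀ i, HasDerivAt (fun s => f s i) (f' i) t) : HasDerivAt f f' t := by
  exact hasDerivAt_pi.2 h

lemma hasDerivAt_mulVec {F : ℝ → Matrix (Fin n) (Fin n) ℂ} {F' : Matrix (Fin n) (Fin n) ℂ}
    {g : ℝ → Fin n → ℂ} {g' : Fin n → ℂ} {t : ℝ}
    (hF : HasDerivAt F F' t) (hg : HasDerivAt g g' t) :
    HasDerivAt (fun s => (F s).mulVec (g s)) (F'.mulVec (g t) + (F t).mulVec g') t := by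
  apply hasDerivAt_of_components
  intro i
  have hFe : ∀ j, HasDerivAt (fun s => F s i j) (F' i j) t := fun j =>
    (entryCLM i j).hasFDerivAt.comp_hasDerivAt t hF
  have hge : ∀ j, HasDerivAt (fun s => g s j) (g' j) t := fun j =>
    (ContinuousLinearMap.proj (R := ℝ) (φ := fun _ : Fin n => ℂ) j).hasFDerivAt.comp_hasDerivAt
      t hg
  have hsum : HasDerivAt (fun s => ∑ j, F s i j * g s j)
      (∑ j, (F' i j * g t j + F t i j * g' j)) t :=
    HasDerivAt.fun_sum fun j _ => (hFe j).mul (hge j)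
  simpa [Matrix.mulVec, dotProduct, Finset.sum_add_distrib] using hsum

theorem tendsto_zero_of_hasDerivAt_mulVec (A' : Matrix (Fin n) (Fin n) ℝ)
    (hA : ∀ z ∈ spectrum ℂ (A'.map Complex.ofReal), z.re < 0)
    (y : ℝ → Fin n → ℝ) (hy : ∀ t, HasDerivAt y (A'.mulVec (y t)) t) :
    Tendsto y atTop (𝓝 0) := by
  set M : Matrix (Fin n) (Fin n) ℂ := A'.map Complex.ofReal with hM
  set z : ℝ → Fin n → ℂ := fun t i => (y t i : ℂ) with hzdef
  have hz : ∀ t, HasDerivAt z (M.mulVec (z t)) t := by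
    intro t
    apply hasDerivAt_of_components
    intro i
    have hyi : HasDerivAt (fun s => y s i) (A'.mulVec (y t) i) t :=
      (ContinuousLinearMap.proj (R := ℝ) (φ := fun _ : Fin n => ℝ) i).hasFDerivAt.comp_hasDerivAt
        t (hy t)
    have hcomp := Complex.ofRealCLM.hasFDerivAt.comp_hasDerivAt t hyi
    convert hcomp using 1
    · exact funext fun s => (Complex.ofRealCLM_apply (y s i)).symm
    all_goals simp [hM, hzdef, Matrix.mulVec, dotProduct, Matrix.map_apply]
  have hFder : ∀ t : ℝ, HasDerivAt (fun s : ℝ => exp ((-s) • M))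
      (-(exp ((-t) • M) * M)) t := by
    intro t
    have h1 := hasDerivAt_exp_smul_const (𝕂 := ℝ) M (-t)
    have h2 : HasDerivAt (fun s : ℝ => -s) (-1) t := (hasDerivAt_id t).neg
    have := h1.scomp_of_eq t h2 rfl
    simp [Function.comp_def] at this ⊢
    exact this
  have hg : ∀ t, HasDerivAt (fun s => (exp ((-s) • M)).mulVec (z s)) 0 t := by
    intro t
    have := hasDerivAt_mulVec (hFder t) (hz t)
    convert this using 1
    rw [Matrix.neg_mulVec, Matrix.mulVec_mulVec]
    abel
  have hconst : ∀ s : ℝ, (exp ((-s) • M)).mulVec (z s)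
      = (exp ((-(0:ℝ)) • M)).mulVec (z 0) := by
    intro s
    exact is_const_of_fderiv_eq_zero (fun u => (hg u).differentiableAt)
      (fun u => by rw [((hg u).hasFDerivAt).fderiv]; ext v; simp) s 0
  have key : ∀ t : ℝ, z t = (exp (t • M)).mulVec (z 0) := by
    intro t
    have h0 : (exp ((-t) • M)).mulVec (z t) = z 0 := by
      rw [hconst t]
      simp [Matrix.one_mulVec, exp_zero]
    have hinv : exp (t • M) * exp ((-t) • M) = 1 := by
      rw [← Matrix.exp_add_of_commute _ _
        (((Commute.refl M).smul_left t).smul_right (-t))]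
      rw [← add_smul, add_neg_cancel, zero_smul, exp_zero]
    calc z t = (1 : Matrix (Fin n) (Fin n) ℂ).mulVec (z t) := by rw [Matrix.one_mulVec]
      _ = (exp (t • M)).mulVec ((exp ((-t) • M)).mulVec (z t)) := by
            rw [Matrix.mulVec_mulVec, hinv]
      _ = (exp (t • M)).mulVec (z 0) := by rw [h0]
  have hzt : Tendsto z atTop (𝓝 0) := by
    have := tendsto_exp_smul_mulVec M hA (z 0)
    exact this.congr fun t => (key t).symm
  rw [tendsto_pi_nhds]
  intro i
  have hzi : Tendsto (fun t => z t i) atTop (𝓝 0) := by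
    have := tendsto_pi_nhds.mp hzt i
    simpa using this
  have := (Complex.continuous_re.tendsto 0).comp hzi
  simp [hzdef, Function.comp_def] at this
  exact this

end Aux

end OutputRegAux

/-- Full-information output regulation via the regulator equations:
with `u = K₁ x + K₂ v`, `K₂ = U - K₁ X`, the error coordinate
`x̄ = x - X v` satisfies `ẋ̄ = (A + B K₁) x̄`, `e = (C + D K₁) x̄`, and the
tracking error tends to zero. -/
theorem full_information_output_regulation
    {n m p q : ℕ}
    (A : Matrix (Fin n) (Fin n) ℝ) (B : Matrix (Fin n) (Fin m) ℝ)
    (E : Matrix (Fin n) (Fin q) ℝ) (C : Matrix (Fin p) (Fin n) ℝ)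
    (D : Matrix (Fin p) (Fin m) ℝ) (F : Matrix (Fin p) (Fin q) ℝ)
    (S : Matrix (Fin q) (Fin q) ℝ)
    (K₁ : Matrix (Fin m) (Fin n) ℝ)
    (hK₁ : IsHurwitz (A + B * K₁))
    (X : Matrix (Fin n) (Fin q) ℝ) (U : Matrix (Fin m) (Fin q) ℝ)
    (hreg1 : X * S = A * X + B * U + E)
    (hreg2 : (0 : Matrix (Fin p) (Fin q) ℝ) = C * X + D * U + F)
    (K₂ : Matrix (Fin m) (Fin q) ℝ) (hK₂ : K₂ = U - K₁ * X)
    (x : ℝ → Fin n → ℝ) (v : ℝ → Fin q → ℝ)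
    (u : ℝ → Fin m → ℝ) (e : ℝ → Fin p → ℝ)
    (hu : ∀ t, u t = K₁.mulVec (x t) + K₂.mulVec (v t))
    (hx : ∀ t, HasDerivAt x (A.mulVec (x t) + B.mulVec (u t) + E.mulVec (v t)) t)
    (hv : ∀ t, HasDerivAt v (S.mulVec (v t)) t)
    (he : ∀ t, e t = C.mulVec (x t) + D.mulVec (u t) + F.mulVec (v t)) :
    (∀ t, HasDerivAt (fun s => x s - X.mulVec (v s))
        ((A + B * K₁).mulVec (x t - X.mulVec (v t))) t) ∧
    (∀ t, e t = (C + D * K₁).mulVec (x t - X.mulVec (v t))) ∧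
    Tendsto e atTop (𝓝 0) := by
  have hmat1 : B * K₂ + E - X * S = -((A + B * K₁) * X) := by
    rw [hK₂, eq_neg_iff_add_eq_zero]
    have h : B * (U - K₁ * X) + E - X * S + (A + B * K₁) * X
        = A * X + B * U + E - X * S := by
      simp only [Matrix.mul_sub, Matrix.mul_add, Matrix.add_mul, Matrix.sub_mul,
        Matrix.mul_assoc]
      abel
    rw [h, ← hreg1, sub_self]
  have hmat2 : D * K₂ + F = -((C + D * K₁) * X) := by
    rw [hK₂, eq_neg_iff_add_eq_zero]
    have h : D * (U - K₁ * X) + F + (C + D * K₁) * X = C * X + D * U + F := by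
      simp only [Matrix.mul_sub, Matrix.mul_add, Matrix.add_mul, Matrix.sub_mul,
        Matrix.mul_assoc]
      abel
    rw [h, ← hreg2]
  have part1 : ∀ t, HasDerivAt (fun s => x s - X.mulVec (v s))
      ((A + B * K₁).mulVec (x t - X.mulVec (v t))) t := by
    intro t
    have hXv : HasDerivAt (fun s => X.mulVec (v s)) (X.mulVec (S.mulVec (v t))) t :=
      (LinearMap.toContinuousLinearMap (X.mulVecLin)).hasFDerivAt.comp_hasDerivAt t (hv t)
    have hd := (hx t).sub hXv
    refine hd.congr_deriv (Eq.symm ?_)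
    rw [hu t]
    rw [Matrix.mulVec_add B, Matrix.mulVec_mulVec, Matrix.mulVec_mulVec, Matrix.mulVec_mulVec,
      Matrix.mulVec_sub, Matrix.mulVec_mulVec]
    have hv2 : (B * K₂).mulVec (v t) + E.mulVec (v t) - (X * S).mulVec (v t)
        = -(((A + B * K₁) * X).mulVec (v t)) := by
      rw [← Matrix.add_mulVec, ← Matrix.sub_mulVec, hmat1, Matrix.neg_mulVec]
    calc (A + B * K₁).mulVec (x t) - ((A + B * K₁) * X).mulVec (v t)
        = (A + B * K₁).mulVec (x t) + (-(((A + B * K₁) * X).mulVec (v t))) := by abel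
      _ = (A + B * K₁).mulVec (x t)
            + ((B * K₂).mulVec (v t) + E.mulVec (v t) - (X * S).mulVec (v t)) := by rw [hv2]
      _ = A.mulVec (x t) + ((B * K₁).mulVec (x t) + (B * K₂).mulVec (v t)) + E.mulVec (v t)
            - (X * S).mulVec (v t) := by rw [Matrix.add_mulVec]; abel
  have part2 : ∀ t, e t = (C + D * K₁).mulVec (x t - X.mulVec (v t)) := by
    intro t
    rw [he t, hu t]
    rw [Matrix.mulVec_add D, Matrix.mulVec_mulVec, Matrix.mulVec_mulVec,
      Matrix.mulVec_sub, Matrix.mulVec_mulVec]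
    have hv2 : (D * K₂).mulVec (v t) + F.mulVec (v t)
        = -(((C + D * K₁) * X).mulVec (v t)) := by
      rw [← Matrix.add_mulVec, hmat2, Matrix.neg_mulVec]
    calc C.mulVec (x t) + ((D * K₁).mulVec (x t) + (D * K₂).mulVec (v t)) + F.mulVec (v t)
        = C.mulVec (x t) + (D * K₁).mulVec (x t)
            + ((D * K₂).mulVec (v t) + F.mulVec (v t)) := by abel
      _ = C.mulVec (x t) + (D * K₁).mulVec (x t)
            + (-(((C + D * K₁) * X).mulVec (v t))) := by rw [hv2]
      _ = (C + D * K₁).mulVec (x t) - ((C + D * K₁) * X).mulVec (v t) := by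
            rw [Matrix.add_mulVec]; abel
  refine ⟨part1, part2, ?_⟩
  have hxb : Tendsto (fun t => x t - X.mulVec (v t)) atTop (𝓝 0) :=
    OutputRegAux.tendsto_zero_of_hasDerivAt_mulVec (A + B * K₁) hK₁ _ part1
  have hcont : Continuous fun yv : Fin n → ℝ => (C + D * K₁).mulVec yv :=
    LinearMap.continuous_of_finiteDimensional ((C + D * K₁).mulVecLin)
  have := (hcont.tendsto 0).comp hxb
  simp only [Matrix.mulVec_zero] at this
  apply this.congr
  intro t
  exact (part2 t).symm
end

section
/- For any complex numbers λ ∈ σ(S), the regulator equations X S = A X + B U + E, 0 = C X + D U + F are solvable for every pair (E, F) if and only if rank [[A − λI, B],[C, D]] = n + p for all λ ∈ σ(S). -/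
open Matrix

-- helper 2: last nonzero in a chain
lemma exists_last_nonzero {α : Type*} [Zero α] (f : ℕ → α) (K : ℕ) (hK : ∀ j, K ≤ j → f j = 0)
    (h : ∃ j, f j ≠ 0) : ∃ j, f j ≠ 0 ∧ f (j + 1) = 0 := by
  by_contra hc
  push_neg at hc
  obtain ⟨j₁, hj₁⟩ := h
  have step : ∀ d, f (j₁ + d) ≠ 0 := by
    intro d
    induction d with
    | zero => simpa using hj₁
    | succ d ih => exact hc _ ih
  exact step K (hK _ (Nat.le_add_left _ _))

-- eigenvector from spectrum membership
lemma eig_of_spectrum {q : ℕ} (Sc : Matrix (Fin q) (Fin q) ℂ) {lam : ℂ}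
    (h : lam ∈ spectrum ℂ Sc) : ∃ u : Fin q → ℂ, u ≠ 0 ∧ Sc *ᵥ u = lam • u := by
  rw [spectrum.mem_iff] at h
  have hdet : (lam • (1 : Matrix (Fin q) (Fin q) ℂ) - Sc).det = 0 := by
    by_contra hd
    exact h (by
      rw [Algebra.algebraMap_eq_smul_one]
      exact (Matrix.isUnit_iff_isUnit_det _).mpr (isUnit_iff_ne_zero.mpr hd))
  obtain ⟨u, hu, huv⟩ := (Matrix.exists_mulVec_eq_zero_iff).mpr hdet
  refine ⟨u, hu, ?_⟩
  have := huv
  rw [Matrix.sub_mulVec, sub_eq_zero, Matrix.smul_mulVec, Matrix.one_mulVec] at this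
  exact this.symm

-- nonzero vector in kernel when rank deficient
lemma exists_ker_of_rank_lt {a b : Type*} [Fintype a] [Fintype b] [DecidableEq a] [DecidableEq b]
    (M : Matrix a b ℂ) (h : M.rank ≠ Fintype.card a) :
    ∃ v : a → ℂ, v ≠ 0 ∧ Mᵀ *ᵥ v = 0 := by
  have hrk := LinearMap.finrank_range_add_finrank_ker (Mᵀ.mulVecLin)
  rw [Module.finrank_pi] at hrk
  have hMt : Mᵀ.rank = M.rank := Matrix.rank_transpose M
  by_contra hc
  push_neg at hc
  have hker : LinearMap.ker (Mᵀ.mulVecLin) = ⊥ := by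
    rw [LinearMap.ker_eq_bot']
    intro v hv
    by_contra hv0
    exact (hc v hv0) hv
  rw [hker, finrank_bot, add_zero] at hrk
  exact h (by rw [← hMt, Matrix.rank, hrk])

lemma mapc_mul {a b c : Type*} [Fintype b] (M : Matrix a b ℝ) (N : Matrix b c ℝ) :
    (M * N).map Complex.ofReal = M.map Complex.ofReal * N.map Complex.ofReal :=
  Matrix.map_mul (f := Complex.ofRealHom)

lemma mapc_add {a b : Type*} (M N : Matrix a b ℝ) :
    (M + N).map Complex.ofReal = M.map Complex.ofReal + N.map Complex.ofReal := by
  ext i j; simp [Matrix.map_apply]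

lemma mapc_zero {a b : Type*} : ((0 : Matrix a b ℝ)).map Complex.ofReal = 0 := by
  ext i j; simp

lemma mapc_transpose {a b : Type*} (M : Matrix a b ℝ) :
    (Mᵀ).map Complex.ofReal = (M.map Complex.ofReal)ᵀ := rfl

lemma mapc_eq_zero {a b : Type*} (M : Matrix a b ℝ)
    (h : M.map Complex.ofReal = 0) : M = 0 := by
  ext i j
  have := congrFun (congrFun h i) j
  simpa [Matrix.map_apply] using this

lemma key_scalar {n m p q : ℕ}
    (Ac : Matrix (Fin n) (Fin n) ℂ) (Bc : Matrix (Fin n) (Fin m) ℂ)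
    (Cc : Matrix (Fin p) (Fin n) ℂ) (Dc : Matrix (Fin p) (Fin m) ℂ)
    (Sc : Matrix (Fin q) (Fin q) ℂ)
    (Xc : Matrix (Fin n) (Fin q) ℂ) (Uc : Matrix (Fin m) (Fin q) ℂ)
    (Ec : Matrix (Fin n) (Fin q) ℂ) (Fc : Matrix (Fin p) (Fin q) ℂ)
    (u : Fin q → ℂ) (v₁ : Fin n → ℂ) (v₂ : Fin p → ℂ) (lam : ℂ)
    (heq1 : Xc * Sc = Ac * Xc + Bc * Uc + Ec)
    (heq2 : (0 : Matrix (Fin p) (Fin q) ℂ) = Cc * Xc + Dc * Uc + Fc)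
    (hSu : Sc *ᵥ u = lam • u)
    (hA : Acᵀ *ᵥ v₁ = lam • v₁ - Ccᵀ *ᵥ v₂)
    (hB : Bcᵀ *ᵥ v₁ = -(Dcᵀ *ᵥ v₂)) :
    v₁ ⬝ᵥ (Ec *ᵥ u) + v₂ ⬝ᵥ (Fc *ᵥ u) = 0 := by
  have hE : Ec = Xc * Sc - Ac * Xc - Bc * Uc := by rw [heq1]; abel
  have hF : Fc = -(Cc * Xc + Dc * Uc) := by
    refine eq_neg_of_add_eq_zero_right ?_
    rw [← heq2]
  set x := Xc *ᵥ u with hx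
  set y := Uc *ᵥ u with hy
  have e0 : (Xc * Sc) *ᵥ u = lam • x := by
    rw [← Matrix.mulVec_mulVec, hSu, Matrix.mulVec_smul]
  have e1 : v₁ ⬝ᵥ (Ac *ᵥ x) = (lam • v₁ - Ccᵀ *ᵥ v₂) ⬝ᵥ x := by
    rw [Matrix.dotProduct_mulVec, ← Matrix.mulVec_transpose, hA]
  have e2 : v₁ ⬝ᵥ (Bc *ᵥ y) = (-(Dcᵀ *ᵥ v₂)) ⬝ᵥ y := by
    rw [Matrix.dotProduct_mulVec, ← Matrix.mulVec_transpose, hB]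
  have e3 : v₂ ⬝ᵥ (Cc *ᵥ x) = (Ccᵀ *ᵥ v₂) ⬝ᵥ x := by
    rw [Matrix.dotProduct_mulVec, ← Matrix.mulVec_transpose]
  have e4 : v₂ ⬝ᵥ (Dc *ᵥ y) = (Dcᵀ *ᵥ v₂) ⬝ᵥ y := by
    rw [Matrix.dotProduct_mulVec, ← Matrix.mulVec_transpose]
  have g1 : Ec *ᵥ u = lam • x - Ac *ᵥ x - Bc *ᵥ y := by
    rw [hE, Matrix.sub_mulVec, Matrix.sub_mulVec, e0, ← Matrix.mulVec_mulVec,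
      ← Matrix.mulVec_mulVec]
  have g2 : Fc *ᵥ u = -(Cc *ᵥ x + Dc *ᵥ y) := by
    rw [hF, Matrix.neg_mulVec, Matrix.add_mulVec, ← Matrix.mulVec_mulVec,
      ← Matrix.mulVec_mulVec]
  rw [g1, g2]
  simp only [dotProduct_sub, dotProduct_neg, dotProduct_add, dotProduct_smul, e1, e2, e3, e4,
    sub_dotProduct, smul_dotProduct, neg_dotProduct, smul_eq_mul]
  ring
lemma dir1 {n m p q : ℕ}
    (A : Matrix (Fin n) (Fin n) ℝ) (B : Matrix (Fin n) (Fin m) ℝ)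
    (C : Matrix (Fin p) (Fin n) ℝ) (D : Matrix (Fin p) (Fin m) ℝ)
    (S : Matrix (Fin q) (Fin q) ℝ)
    (hsol : ∀ (E : Matrix (Fin n) (Fin q) ℝ) (F : Matrix (Fin p) (Fin q) ℝ),
      ∃ (X : Matrix (Fin n) (Fin q) ℝ) (U : Matrix (Fin m) (Fin q) ℝ),
        X * S = A * X + B * U + E ∧ (0 : Matrix (Fin p) (Fin q) ℝ) = C * X + D * U + F)
    {lam : ℂ} (hlam : lam ∈ spectrum ℂ (S.map Complex.ofReal)) :
    (Matrix.fromBlocks (A.map Complex.ofReal - lam • (1 : Matrix (Fin n) (Fin n) ℂ))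
        (B.map Complex.ofReal) (C.map Complex.ofReal) (D.map Complex.ofReal)).rank = n + p := by
  set Ac := A.map Complex.ofReal
  set Bc := B.map Complex.ofReal
  set Cc := C.map Complex.ofReal
  set Dc := D.map Complex.ofReal
  set Sc := S.map Complex.ofReal
  set K := Matrix.fromBlocks (Ac - lam • (1 : Matrix (Fin n) (Fin n) ℂ)) Bc Cc Dc with hK
  by_contra hne
  obtain ⟨u, hu0, hSu⟩ := eig_of_spectrum Sc hlam
  obtain ⟨v, hv0, hvK⟩ := exists_ker_of_rank_lt K (by
    simpa [Fintype.card_sum] using hne)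
  set v₁ : Fin n → ℂ := v ∘ Sum.inl with hv₁
  set v₂ : Fin p → ℂ := v ∘ Sum.inr with hv₂
  rw [hK, Matrix.fromBlocks_transpose, Matrix.fromBlocks_mulVec] at hvK
  have h1 : (Ac - lam • (1 : Matrix (Fin n) (Fin n) ℂ))ᵀ *ᵥ v₁ + Ccᵀ *ᵥ v₂ = 0 := by
    funext i; exact congrFun hvK (Sum.inl i)
  have h2 : Bcᵀ *ᵥ v₁ + Dcᵀ *ᵥ v₂ = 0 := by
    funext i; exact congrFun hvK (Sum.inr i)
  have hA : Acᵀ *ᵥ v₁ = lam • v₁ - Ccᵀ *ᵥ v₂ := by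
    rw [Matrix.transpose_sub, Matrix.transpose_smul, Matrix.transpose_one,
      Matrix.sub_mulVec, Matrix.smul_mulVec, Matrix.one_mulVec] at h1
    rw [← sub_eq_zero]
    calc Acᵀ *ᵥ v₁ - (lam • v₁ - Ccᵀ *ᵥ v₂)
        = Acᵀ *ᵥ v₁ - lam • v₁ + Ccᵀ *ᵥ v₂ := by abel
      _ = 0 := h1
  have hB : Bcᵀ *ᵥ v₁ = -(Dcᵀ *ᵥ v₂) := eq_neg_of_add_eq_zero_left h2
  -- scalar annihilation for arbitrary real (E, F)
  have hann : ∀ (E : Matrix (Fin n) (Fin q) ℝ) (F : Matrix (Fin p) (Fin q) ℝ),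
      v₁ ⬝ᵥ (E.map Complex.ofReal *ᵥ u) + v₂ ⬝ᵥ (F.map Complex.ofReal *ᵥ u) = 0 := by
    intro E F
    obtain ⟨X, U, heq1, heq2⟩ := hsol E F
    have heq1c : X.map Complex.ofReal * Sc = Ac * X.map Complex.ofReal +
        Bc * U.map Complex.ofReal + E.map Complex.ofReal := by
      have := congrArg (Matrix.map · Complex.ofReal) heq1
      simpa [mapc_mul, mapc_add] using this
    have heq2c : (0 : Matrix (Fin p) (Fin q) ℂ) = Cc * X.map Complex.ofReal +
        Dc * U.map Complex.ofReal + F.map Complex.ofReal := by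
      have := congrArg (Matrix.map · Complex.ofReal) heq2
      simpa [mapc_mul, mapc_add, mapc_zero] using this
    exact key_scalar Ac Bc Cc Dc Sc _ _ _ _ u v₁ v₂ lam heq1c heq2c hSu hA hB
  have hv1z : ∀ (i : Fin n) (j : Fin q), v₁ i * u j = 0 := by
    intro i j
    have := hann (Matrix.single i j 1) 0
    have hmap : ((Matrix.single i j (1:ℝ)).map Complex.ofReal) = Matrix.single i j (1:ℂ) := by
      ext a b; simp [Matrix.single, apply_ite]
    rw [hmap, mapc_zero] at this
    simpa [dotProduct, Matrix.mulVec, Matrix.single, ite_and] using this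
  have hv2z : ∀ (i : Fin p) (j : Fin q), v₂ i * u j = 0 := by
    intro i j
    have := hann 0 (Matrix.single i j 1)
    have hmap : ((Matrix.single i j (1:ℝ)).map Complex.ofReal) = Matrix.single i j (1:ℂ) := by
      ext a b; simp [Matrix.single, apply_ite]
    rw [hmap, mapc_zero] at this
    simpa [dotProduct, Matrix.mulVec, Matrix.single, ite_and] using this
  obtain ⟨j0, hj0⟩ := Function.ne_iff.mp hu0
  apply hv0
  funext s
  cases s with
  | inl i =>
      have := hv1z i j0
      rcases mul_eq_zero.mp this with h | h
      · exact h
      · exact absurd h (by simpa using hj0)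
  | inr i =>
      have := hv2z i j0
      rcases mul_eq_zero.mp this with h | h
      · exact h
      · exact absurd h (by simpa using hj0)

lemma expand_lin {a b : Type*} [Fintype a] [Fintype b] [DecidableEq a] [DecidableEq b]
    (ψ : Matrix a b ℝ →ₗ[ℝ] ℝ) (M : Matrix a b ℝ) :
    ψ M = ∑ i, ∑ j, M i j * ψ (Matrix.single i j 1) := by
  conv_lhs => rw [matrix_eq_sum_single M]
  rw [map_sum]
  refine Finset.sum_congr rfl fun i _ => ?_
  rw [map_sum]
  refine Finset.sum_congr rfl fun j _ => ?_
  have h : Matrix.single i j (M i j) = (M i j) • Matrix.single i j (1:ℝ) := by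
    ext a b
    simp only [Matrix.single, Matrix.smul_apply, Matrix.of_apply, smul_eq_mul]
    split <;> simp
  rw [h, LinearMap.map_smul, smul_eq_mul]

lemma stdBasis_mul_right {n q r : ℕ} (k : Fin n) (l : Fin q) (S : Matrix (Fin q) (Fin r) ℝ) :
    Matrix.single k l (1:ℝ) * S = ∑ j, S l j • Matrix.single k j (1:ℝ) := by
  ext a b
  simp only [Matrix.mul_apply, Matrix.sum_apply, Matrix.single, Matrix.smul_apply,
    Matrix.of_apply, smul_eq_mul, ite_mul, one_mul, zero_mul, mul_ite, mul_one, mul_zero]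
  by_cases hk : k = a <;> simp [hk, Finset.sum_ite_eq, Finset.sum_ite_eq']

lemma mul_stdBasis_left {n q r : ℕ} (A : Matrix (Fin r) (Fin n) ℝ) (k : Fin n) (l : Fin q) :
    A * Matrix.single k l (1:ℝ) = ∑ i, A i k • Matrix.single i l (1:ℝ) := by
  ext a b
  simp only [Matrix.mul_apply, Matrix.sum_apply, Matrix.single, Matrix.smul_apply,
    Matrix.of_apply, smul_eq_mul, ite_mul, one_mul, zero_mul, mul_ite, mul_one, mul_zero]
  by_cases hl : l = b <;> simp [hl, Finset.sum_ite_eq, Finset.sum_ite_eq', eq_comm]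

lemma exists_ann' {V W : Type*} [AddCommGroup V] [Module ℝ V] [AddCommGroup W] [Module ℝ W]
    [FiniteDimensional ℝ W] (L : V →ₗ[ℝ] W) (h : ¬ Function.Surjective L) :
    ∃ φ : W →ₗ[ℝ] ℝ, φ ≠ 0 ∧ ∀ v, φ (L v) = 0 := by
  have hr : LinearMap.range L < ⊤ := by
    rw [lt_top_iff_ne_top]
    simpa [LinearMap.range_eq_top] using h
  obtain ⟨f, hf, hf'⟩ := Submodule.exists_dual_map_eq_bot_of_lt_top hr inferInstance
  refine ⟨f, hf, fun v => ?_⟩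
  have : f (L v) ∈ (LinearMap.range L).map f :=
    Submodule.mem_map_of_mem (LinearMap.mem_range_self L v)
  rwa [hf', Submodule.mem_bot] at this

lemma dir2_functional {n m p q : ℕ}
    (A : Matrix (Fin n) (Fin n) ℝ) (B : Matrix (Fin n) (Fin m) ℝ)
    (C : Matrix (Fin p) (Fin n) ℝ) (D : Matrix (Fin p) (Fin m) ℝ)
    (S : Matrix (Fin q) (Fin q) ℝ)
    (hns : ¬ ∀ (E : Matrix (Fin n) (Fin q) ℝ) (F : Matrix (Fin p) (Fin q) ℝ),
      ∃ (X : Matrix (Fin n) (Fin q) ℝ) (U : Matrix (Fin m) (Fin q) ℝ),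
        X * S = A * X + B * U + E ∧ (0 : Matrix (Fin p) (Fin q) ℝ) = C * X + D * U + F) :
    ∃ (P : Matrix (Fin n) (Fin q) ℝ) (Q : Matrix (Fin p) (Fin q) ℝ),
      ¬(P = 0 ∧ Q = 0) ∧ P * Sᵀ = Aᵀ * P + Cᵀ * Q ∧ Bᵀ * P + Dᵀ * Q = 0 := by
  set L : (Matrix (Fin n) (Fin q) ℝ × Matrix (Fin m) (Fin q) ℝ) →ₗ[ℝ]
      (Matrix (Fin n) (Fin q) ℝ × Matrix (Fin p) (Fin q) ℝ) :=
    { toFun := fun z => (z.1 * S - A * z.1 - B * z.2, -(C * z.1) - D * z.2)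
      map_add' := by
        intro z w
        refine Prod.ext ?_ ?_ <;>
          simp only [Prod.fst_add, Prod.snd_add, Matrix.add_mul, Matrix.mul_add] <;> abel
      map_smul' := by
        intro c z
        refine Prod.ext ?_ ?_ <;>
          simp [Matrix.smul_mul, Matrix.mul_smul, smul_sub, smul_neg] } with hL
  have hLsurj : ¬ Function.Surjective L := by
    intro hsurj
    push_neg at hns
    obtain ⟨E, F, hEF⟩ := hns
    obtain ⟨z, hz⟩ := hsurj (E, F)
    rw [hL] at hz
    have hz1 : z.1 * S - A * z.1 - B * z.2 = E := congrArg Prod.fst hz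
    have hz2 : -(C * z.1) - D * z.2 = F := congrArg Prod.snd hz
    exact hEF z.1 z.2 (by rw [← hz1]; abel) (by rw [← hz2]; abel)
  obtain ⟨φ, hφ0, hφ⟩ := exists_ann' L hLsurj
  set φ₁ : Matrix (Fin n) (Fin q) ℝ →ₗ[ℝ] ℝ := φ.comp (LinearMap.inl ℝ _ _) with hφ₁
  set φ₂ : Matrix (Fin p) (Fin q) ℝ →ₗ[ℝ] ℝ := φ.comp (LinearMap.inr ℝ _ _) with hφ₂
  have hsplit : ∀ (E : Matrix (Fin n) (Fin q) ℝ) (F : Matrix (Fin p) (Fin q) ℝ),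
      φ (E, F) = φ₁ E + φ₂ F := by
    intro E F
    have h : ((E, F) : Matrix (Fin n) (Fin q) ℝ × Matrix (Fin p) (Fin q) ℝ)
        = (E, 0) + (0, F) := by simp
    rw [h, map_add]
    rfl
  set P : Matrix (Fin n) (Fin q) ℝ := Matrix.of fun i j => φ₁ (Matrix.single i j 1) with hP
  set Q : Matrix (Fin p) (Fin q) ℝ := Matrix.of fun i j => φ₂ (Matrix.single i j 1) with hQ
  have hφ1P : ∀ M, φ₁ M = ∑ i, ∑ j, M i j * P i j := fun M => expand_lin φ₁ M
  have hφ2Q : ∀ M, φ₂ M = ∑ i, ∑ j, M i j * Q i j := fun M => expand_lin φ₂ M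
  refine ⟨P, Q, ?_, ?_, ?_⟩
  · rintro ⟨hP0, hQ0⟩
    apply hφ0
    apply LinearMap.ext
    intro z
    have h : φ z = φ₁ z.1 + φ₂ z.2 := by rw [← hsplit]
    rw [h, hφ1P, hφ2Q, hP0, hQ0]
    simp
  · ext k l
    have h0 := hφ (Matrix.single k l 1, 0)
    rw [hL] at h0
    simp only [LinearMap.coe_mk, AddHom.coe_mk] at h0
    rw [hsplit] at h0
    simp only [Matrix.mul_zero, sub_zero, map_sub, map_neg] at h0
    have e1 : φ₁ (Matrix.single k l (1:ℝ) * S) = ∑ j, S l j * P k j := by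
      rw [stdBasis_mul_right, map_sum]
      exact Finset.sum_congr rfl fun j _ => by rw [LinearMap.map_smul, smul_eq_mul]; rfl
    have e2 : φ₁ (A * Matrix.single k l (1:ℝ)) = ∑ i, A i k * P i l := by
      rw [mul_stdBasis_left, map_sum]
      exact Finset.sum_congr rfl fun i _ => by rw [LinearMap.map_smul, smul_eq_mul]; rfl
    have e3 : φ₂ (C * Matrix.single k l (1:ℝ)) = ∑ i, C i k * Q i l := by
      rw [mul_stdBasis_left, map_sum]
      exact Finset.sum_congr rfl fun i _ => by rw [LinearMap.map_smul, smul_eq_mul]; rfl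
    rw [e1, e2, e3] at h0
    simp only [Matrix.mul_apply, Matrix.add_apply, Matrix.transpose_apply]
    have goalrw : (∑ j, P k j * S l j) = ∑ j, S l j * P k j :=
      Finset.sum_congr rfl fun j _ => mul_comm _ _
    rw [goalrw]
    linarith [h0]
  · ext k l
    have h0 := hφ (0, Matrix.single k l 1)
    rw [hL] at h0
    simp only [LinearMap.coe_mk, AddHom.coe_mk] at h0
    rw [hsplit] at h0
    simp only [Matrix.mul_zero, Matrix.zero_mul, zero_sub, sub_zero, neg_zero, map_neg,
      map_sub, map_zero, zero_add, neg_add_eq_zero, neg_eq_zero, add_zero] at h0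
    have e2 : φ₁ (B * Matrix.single k l (1:ℝ)) = ∑ i, B i k * P i l := by
      rw [mul_stdBasis_left, map_sum]
      exact Finset.sum_congr rfl fun i _ => by rw [LinearMap.map_smul, smul_eq_mul]; rfl
    have e3 : φ₂ (D * Matrix.single k l (1:ℝ)) = ∑ i, D i k * Q i l := by
      rw [mul_stdBasis_left, map_sum]
      exact Finset.sum_congr rfl fun i _ => by rw [LinearMap.map_smul, smul_eq_mul]; rfl
    rw [e2, e3] at h0
    simp only [Matrix.add_apply, Matrix.mul_apply, Matrix.transpose_apply, Matrix.zero_apply]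
    linarith [h0]

lemma rank_ne_of_ker {a b : Type*} [Fintype a] [Fintype b] [DecidableEq a] [DecidableEq b]
    (M : Matrix a b ℂ) (v : a → ℂ) (hv : v ≠ 0) (hMv : Mᵀ *ᵥ v = 0) :
    M.rank ≠ Fintype.card a := by
  intro h
  have hrk := LinearMap.finrank_range_add_finrank_ker (Mᵀ.mulVecLin)
  rw [Module.finrank_pi] at hrk
  have hMt : Mᵀ.rank = M.rank := Matrix.rank_transpose M
  have h1 : Mᵀ.rank = Fintype.card a := by rw [hMt, h]
  rw [Matrix.rank] at h1
  rw [h1] at hrk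
  have hker0 : Module.finrank ℂ (LinearMap.ker (Mᵀ.mulVecLin)) = 0 := by omega
  have : LinearMap.ker (Mᵀ.mulVecLin) = ⊥ := Submodule.finrank_eq_zero.mp hker0
  have hv0 : v ∈ LinearMap.ker (Mᵀ.mulVecLin) := by
    rw [LinearMap.mem_ker]; exact hMv
  rw [this, Submodule.mem_bot] at hv0
  exact hv hv0

lemma mulVecLin_pow_apply {q : ℕ} (N : Matrix (Fin q) (Fin q) ℂ) (k : ℕ) (w : Fin q → ℂ) :
    (((N.mulVecLin : Module.End ℂ (Fin q → ℂ))) ^ k) w = (N ^ k) *ᵥ w := by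
  induction k with
  | zero => simp [Matrix.one_mulVec]
  | succ k ih =>
      rw [pow_succ', pow_succ', Module.End.mul_apply, Matrix.mulVecLin_apply, ih,
        Matrix.mulVec_mulVec]

lemma end_sub_smul {q : ℕ} (T : Matrix (Fin q) (Fin q) ℂ) (μ : ℂ) :
    (T.mulVecLin : Module.End ℂ (Fin q → ℂ)) - μ • 1 = (T - μ • 1).mulVecLin := by
  refine LinearMap.ext fun x => ?_
  simp only [LinearMap.sub_apply, LinearMap.smul_apply, Module.End.one_apply,
    Matrix.mulVecLin_apply, Matrix.sub_mulVec, Matrix.smul_mulVec, Matrix.one_mulVec]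

lemma dir2_eigen {n m p q : ℕ}
    (Ac : Matrix (Fin n) (Fin n) ℂ) (Bc : Matrix (Fin n) (Fin m) ℂ)
    (Cc : Matrix (Fin p) (Fin n) ℂ) (Dc : Matrix (Fin p) (Fin m) ℂ)
    (Sc : Matrix (Fin q) (Fin q) ℂ)
    (Pc : Matrix (Fin n) (Fin q) ℂ) (Qc : Matrix (Fin p) (Fin q) ℂ)
    (hPQ : ¬(Pc = 0 ∧ Qc = 0))
    (Rc1 : Pc * Scᵀ = Acᵀ * Pc + Ccᵀ * Qc)
    (Rc2 : Bcᵀ * Pc + Dcᵀ * Qc = 0) :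
    ∃ μ : ℂ, μ ∈ spectrum ℂ Sc ∧ ∃ v : Fin n ⊕ Fin p → ℂ, v ≠ 0 ∧
      (Matrix.fromBlocks (Ac - μ • (1 : Matrix (Fin n) (Fin n) ℂ)) Bc Cc Dc)ᵀ *ᵥ v = 0 := by
  classical
  set f : Module.End ℂ (Fin q → ℂ) := (Scᵀ).mulVecLin with hf
  -- find a generalized eigenvector not annihilated by both Pc and Qc
  have hfind : ∃ (μ : ℂ) (w : Fin q → ℂ), w ∈ f.maxGenEigenspace μ ∧
      ¬(Pc *ᵥ w = 0 ∧ Qc *ᵥ w = 0) := by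
    by_contra hc
    push_neg at hc
    set ρ : (Fin q → ℂ) →ₗ[ℂ] (Fin n → ℂ) × (Fin p → ℂ) :=
      LinearMap.prod Pc.mulVecLin Qc.mulVecLin with hρ
    have htop : ⊤ ≤ LinearMap.ker ρ := by
      rw [← Module.End.iSup_maxGenEigenspace_eq_top f]
      refine iSup_le fun μ => ?_
      intro z hz
      rw [LinearMap.mem_ker, hρ]
      obtain ⟨h1, h2⟩ := hc μ z hz
      exact Prod.ext (by simpa using h1) (by simpa using h2)
    have hall : ∀ z : Fin q → ℂ, Pc *ᵥ z = 0 ∧ Qc *ᵥ z = 0 := by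
      intro z
      have hz := htop (Submodule.mem_top : z ∈ ⊤)
      rw [LinearMap.mem_ker, hρ] at hz
      constructor
      · have := congrArg Prod.fst hz; simpa using this
      · have := congrArg Prod.snd hz; simpa using this
    refine hPQ ⟨?_, ?_⟩
    · ext i j
      have := congrFun (hall (Pi.single j 1)).1 i
      simpa [Matrix.mulVec_single] using this
    · ext i j
      have := congrFun (hall (Pi.single j 1)).2 i
      simpa [Matrix.mulVec_single] using this
  obtain ⟨μ, w, hw, hPQw⟩ := hfind
  have hw0 : w ≠ 0 := by
    intro h
    exact hPQw (by simp [h])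
  rw [Module.End.mem_maxGenEigenspace] at hw
  obtain ⟨k, hk⟩ := hw
  set N : Matrix (Fin q) (Fin q) ℂ := Scᵀ - μ • 1 with hN
  have hkN : (N ^ k) *ᵥ w = 0 := by
    rw [← mulVecLin_pow_apply, ← end_sub_smul]
    exact hk
  have hkne : k ≠ 0 := by
    intro h
    rw [h, pow_zero, Matrix.one_mulVec] at hkN
    exact hw0 hkN
  -- μ ∈ spectrum
  have hdetN : N.det = 0 := by
    have hdet : (N ^ k).det = 0 := Matrix.exists_mulVec_eq_zero_iff.mp ⟨w, hw0, hkN⟩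
    rw [Matrix.det_pow] at hdet
    exact pow_eq_zero_iff hkne |>.mp hdet
  have hspec : μ ∈ spectrum ℂ Sc := by
    rw [spectrum.mem_iff]
    intro hunit
    rw [Algebra.algebraMap_eq_smul_one] at hunit
    have := (Matrix.isUnit_iff_isUnit_det _).mp hunit
    rw [isUnit_iff_ne_zero] at this
    apply this
    have : (μ • (1 : Matrix (Fin q) (Fin q) ℂ) - Sc)ᵀ = -N := by
      rw [Matrix.transpose_sub, Matrix.transpose_smul, Matrix.transpose_one, hN]
      abel
    calc (μ • (1 : Matrix (Fin q) (Fin q) ℂ) - Sc).det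
        = ((μ • (1 : Matrix (Fin q) (Fin q) ℂ) - Sc)ᵀ).det := (Matrix.det_transpose _).symm
      _ = (-N).det := by rw [this]
      _ = (-1) ^ q * N.det := by rw [Matrix.det_neg, Fintype.card_fin]
      _ = 0 := by rw [hdetN, mul_zero]
  -- the chain
  set y : ℕ → (Fin q → ℂ) := fun j => (N ^ j) *ᵥ w with hy
  have hyzero : ∀ j, k ≤ j → y j = 0 := by
    intro j hj
    have : N ^ j = N ^ (j - k) * N ^ k := by
      rw [← pow_add]
      congr 1
      omega
    rw [hy]
    simp only
    rw [this, ← Matrix.mulVec_mulVec, hkN, Matrix.mulVec_zero]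
  have hsucc : ∀ j, N *ᵥ y j = y (j + 1) := by
    intro j
    rw [hy]
    simp only
    rw [Matrix.mulVec_mulVec, ← pow_succ']
  -- choose x
  have hxex : ∃ x : Fin q → ℂ, Pc *ᵥ (N *ᵥ x) = 0 ∧ ¬(Pc *ᵥ x = 0 ∧ Qc *ᵥ x = 0) := by
    by_cases hcase : ∃ j, Pc *ᵥ y j ≠ 0
    · obtain ⟨j, hj1, hj2⟩ := exists_last_nonzero (fun j => Pc *ᵥ y j) k
        (fun j hj => by rw [hyzero j hj, Matrix.mulVec_zero]) hcase
      exact ⟨y j, by rw [hsucc]; exact hj2, fun h => hj1 h.1⟩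
    · push_neg at hcase
      refine ⟨w, ?_, ?_⟩
      · have h1 : N *ᵥ w = y 1 := by rw [← hsucc 0]; rw [hy]; simp [Matrix.one_mulVec]
        rw [h1]; exact hcase 1
      · exact hPQw
  obtain ⟨x, hNx, hxne⟩ := hxex
  set v₁ := Pc *ᵥ x with hv₁
  set v₂ := Qc *ᵥ x with hv₂
  -- the two block relations
  have heqA : Acᵀ *ᵥ v₁ - μ • v₁ + Ccᵀ *ᵥ v₂ = 0 := by
    have hPN : Pc * N = Acᵀ * Pc + Ccᵀ * Qc - μ • Pc := by
      rw [hN, Matrix.mul_sub, Rc1, Matrix.mul_smul, Matrix.mul_one]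
    calc Acᵀ *ᵥ v₁ - μ • v₁ + Ccᵀ *ᵥ v₂
        = (Acᵀ * Pc + Ccᵀ * Qc - μ • Pc) *ᵥ x := by
          rw [Matrix.sub_mulVec, Matrix.add_mulVec, Matrix.smul_mulVec,
            ← Matrix.mulVec_mulVec, ← Matrix.mulVec_mulVec, hv₁, hv₂]
          abel
      _ = Pc *ᵥ (N *ᵥ x) := by rw [← hPN, Matrix.mulVec_mulVec]
      _ = 0 := hNx
  have heqB : Bcᵀ *ᵥ v₁ + Dcᵀ *ᵥ v₂ = 0 := by
    calc Bcᵀ *ᵥ v₁ + Dcᵀ *ᵥ v₂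
        = (Bcᵀ * Pc + Dcᵀ * Qc) *ᵥ x := by
          rw [Matrix.add_mulVec, ← Matrix.mulVec_mulVec, ← Matrix.mulVec_mulVec]
      _ = 0 := by rw [Rc2, Matrix.zero_mulVec]
  refine ⟨μ, hspec, Sum.elim v₁ v₂, ?_, ?_⟩
  · intro h
    refine hxne ⟨?_, ?_⟩
    · funext i; exact congrFun h (Sum.inl i)
    · funext i; exact congrFun h (Sum.inr i)
  · rw [Matrix.fromBlocks_transpose, Matrix.fromBlocks_mulVec]
    have hc1 : (Sum.elim v₁ v₂) ∘ Sum.inl = v₁ := rfl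
    have hc2 : (Sum.elim v₁ v₂) ∘ Sum.inr = v₂ := rfl
    rw [hc1, hc2]
    have h1 : (Ac - μ • (1 : Matrix (Fin n) (Fin n) ℂ))ᵀ *ᵥ v₁ + Ccᵀ *ᵥ v₂ = 0 := by
      rw [Matrix.transpose_sub, Matrix.transpose_smul, Matrix.transpose_one,
        Matrix.sub_mulVec, Matrix.smul_mulVec, Matrix.one_mulVec]
      exact heqA
    rw [h1, heqB]
    funext s
    cases s <;> simp

/-- The regulator equations are solvable for every pair `(E, F)` iff the
transmission-zero rank condition holds at every eigenvalue of `S`. -/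
theorem regulator_equations_solvable_iff_rank {n m p q : ℕ}
    (A : Matrix (Fin n) (Fin n) ℝ) (B : Matrix (Fin n) (Fin m) ℝ)
    (C : Matrix (Fin p) (Fin n) ℝ) (D : Matrix (Fin p) (Fin m) ℝ)
    (S : Matrix (Fin q) (Fin q) ℝ) :
    (∀ (E : Matrix (Fin n) (Fin q) ℝ) (F : Matrix (Fin p) (Fin q) ℝ),
      ∃ (X : Matrix (Fin n) (Fin q) ℝ) (U : Matrix (Fin m) (Fin q) ℝ),
        X * S = A * X + B * U + E ∧ (0 : Matrix (Fin p) (Fin q) ℝ) = C * X + D * U + F) ↔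
    (∀ lam ∈ spectrum ℂ (S.map Complex.ofReal),
      (Matrix.fromBlocks (A.map Complex.ofReal - lam • (1 : Matrix (Fin n) (Fin n) ℂ))
          (B.map Complex.ofReal) (C.map Complex.ofReal) (D.map Complex.ofReal)).rank
        = n + p) := by
  constructor
  · intro hsol lam hlam
    exact dir1 A B C D S hsol hlam
  · intro hrank
    by_contra hns
    obtain ⟨P, Q, hPQ, R1, R2⟩ := dir2_functional A B C D S hns
    have hPQc : ¬(P.map Complex.ofReal = 0 ∧ Q.map Complex.ofReal = 0) := by
      rintro ⟨h1, h2⟩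
      exact hPQ ⟨mapc_eq_zero P h1, mapc_eq_zero Q h2⟩
    have Rc1 : P.map Complex.ofReal * (S.map Complex.ofReal)ᵀ =
        (A.map Complex.ofReal)ᵀ * P.map Complex.ofReal +
        (C.map Complex.ofReal)ᵀ * Q.map Complex.ofReal := by
      have := congrArg (Matrix.map · Complex.ofReal) R1
      simpa [mapc_mul, mapc_add, mapc_transpose] using this
    have Rc2 : (B.map Complex.ofReal)ᵀ * P.map Complex.ofReal +
        (D.map Complex.ofReal)ᵀ * Q.map Complex.ofReal = 0 := by
      have := congrArg (Matrix.map · Complex.ofReal) R2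
      simpa [mapc_mul, mapc_add, mapc_transpose, mapc_zero] using this
    obtain ⟨μ, hspec, v, hv0, hKv⟩ := dir2_eigen (A.map Complex.ofReal) (B.map Complex.ofReal)
      (C.map Complex.ofReal) (D.map Complex.ofReal) (S.map Complex.ofReal)
      (P.map Complex.ofReal) (Q.map Complex.ofReal) hPQc Rc1 Rc2
    refine rank_ne_of_ker _ v hv0 hKv ?_
    rw [hrank μ hspec]
    simp [Fintype.card_sum]
end

section
/- Let (A, B) be a controllable pair with A ∈ ℝ^{n×n}, B ∈ ℝ^{n×m}, and let P be the unique positive definite solution of the algebraic Riccati equation Aᵀ P + P A − P B Bᵀ P + I_n = 0. If λ ∈ ℂ has Re λ ≥ 1, then A − λ B Bᵀ P is Hurwitz. -/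
open Matrix

def IsHurwitzC {n : ℕ} (M : Matrix (Fin n) (Fin n) ℂ) : Prop :=
  ∀ z ∈ spectrum ℂ M, z.re < 0

/-- Controllability: the controllability matrix `[B, AB, …, A^{n−1}B]` has rank `n`. -/
def Controllable {n m : ℕ} (A : Matrix (Fin n) (Fin n) ℝ) (B : Matrix (Fin n) (Fin m) ℝ) :
    Prop :=
  (Matrix.of fun (i : Fin n) (jk : Fin n × Fin m) =>
    (A ^ (jk.1 : ℕ) * B) i jk.2).rank = n

private lemma mapC_mul {n m k : ℕ} (X : Matrix (Fin n) (Fin m) ℝ) (Y : Matrix (Fin m) (Fin k) ℝ) :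
    (X * Y).map Complex.ofReal = X.map Complex.ofReal * Y.map Complex.ofReal :=
  Matrix.map_mul (f := Complex.ofRealHom)

private lemma conj_mapC {a b : ℕ} (X : Matrix (Fin a) (Fin b) ℝ) :
    (X.map Complex.ofReal)ᴴ = (Xᵀ).map Complex.ofReal := by
  rw [← Matrix.conjTranspose_map Complex.ofReal (fun a => by simp)]
  congr 1

section
open scoped ComplexOrder
private lemma star_dot_re_pos {k : ℕ} {v : Fin k → ℂ} (hv : v ≠ 0) :
    0 < (star v ⬝ᵥ v).re := by
  have h0 : (0 : ℂ) < star v ⬝ᵥ v := Matrix.dotProduct_star_self_pos_iff.mpr hv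
  exact (Complex.lt_def.mp h0).1

private lemma re_dot_CT_mul_self_nonneg {a b : ℕ} (N : Matrix (Fin a) (Fin b) ℂ)
    (v : Fin b → ℂ) : 0 ≤ (star v ⬝ᵥ (Nᴴ * N) *ᵥ v).re := by
  have := (Matrix.posSemidef_conjTranspose_mul_self N).re_dotProduct_nonneg v
  simpa [RCLike.re_to_complex] using this
end

private lemma re_quad {n : ℕ} (P : Matrix (Fin n) (Fin n) ℝ) (v : Fin n → ℂ) :
    (star v ⬝ᵥ (P.map Complex.ofReal) *ᵥ v).re
      = (fun i => (v i).re) ⬝ᵥ P *ᵥ (fun i => (v i).re)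
        + (fun i => (v i).im) ⬝ᵥ P *ᵥ (fun i => (v i).im) := by
  simp only [dotProduct, mulVec, Matrix.map_apply, Pi.star_apply, Complex.star_def,
    Finset.mul_sum, Complex.re_sum, ← Finset.sum_add_distrib]
  refine Finset.sum_congr rfl fun i _ => Finset.sum_congr rfl fun j _ => ?_
  simp [Complex.mul_re, Complex.mul_im]

private lemma posdef_mapC {n : ℕ} {P : Matrix (Fin n) (Fin n) ℝ} (hP : P.PosDef)
    {v : Fin n → ℂ} (hv : v ≠ 0) :
    0 < (star v ⬝ᵥ (P.map Complex.ofReal) *ᵥ v).re := by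
  rw [re_quad]
  set x : Fin n → ℝ := fun i => (v i).re with hx
  set y : Fin n → ℝ := fun i => (v i).im with hy
  have hxy : x ≠ 0 ∨ y ≠ 0 := by
    by_contra h
    push_neg at h
    apply hv
    funext i
    have h1 := congrFun h.1 i
    have h2 := congrFun h.2 i
    exact Complex.ext h1 h2
  have hsd := hP.posSemidef
  rcases hxy with hx0 | hy0
  · have h1 : 0 < x ⬝ᵥ P *ᵥ x := by simpa using hP.dotProduct_mulVec_pos hx0
    have h2 : 0 ≤ y ⬝ᵥ P *ᵥ y := by simpa using hsd.dotProduct_mulVec_nonneg y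
    linarith
  · have h1 : 0 ≤ x ⬝ᵥ P *ᵥ x := by simpa using hsd.dotProduct_mulVec_nonneg x
    have h2 : 0 < y ⬝ᵥ P *ᵥ y := by simpa using hP.dotProduct_mulVec_pos hy0
    linarith

/-- Riccati-based robust stabilization: if `P` is the positive definite solution of
`Aᵀ P + P A − P B Bᵀ P + I = 0` and `Re λ ≥ 1`, then `A − λ B Bᵀ P` is Hurwitz. -/
theorem riccati_gain_stabilizes {n m : ℕ}
    (A : Matrix (Fin n) (Fin n) ℝ) (B : Matrix (Fin n) (Fin m) ℝ)
    (hctrb : Controllable A B)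
    (P : Matrix (Fin n) (Fin n) ℝ) (hP : P.PosDef) (hPsymm : P.IsSymm)
    (hric : Aᵀ * P + P * A - P * B * Bᵀ * P + 1 = 0)
    (lam : ℂ) (hlam : 1 ≤ lam.re) :
    IsHurwitzC (A.map Complex.ofReal - lam • ((B * Bᵀ * P).map Complex.ofReal)) := by
  intro z hz
  set M : Matrix (Fin n) (Fin n) ℂ :=
    A.map Complex.ofReal - lam • ((B * Bᵀ * P).map Complex.ofReal) with hM
  -- get eigenvector
  rw [spectrum.mem_iff, Matrix.isUnit_iff_isUnit_det, isUnit_iff_ne_zero, not_not] at hz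
  obtain ⟨v, hv, hker⟩ := (Matrix.exists_mulVec_eq_zero_iff).mpr hz
  have hMv : M *ᵥ v = z • v := by
    have h2 := congrArg (· + M *ᵥ v) hker
    simp only [Matrix.sub_mulVec, sub_add_cancel, zero_add] at h2
    rw [← h2, Algebra.algebraMap_eq_smul_one, Matrix.smul_mulVec, Matrix.one_mulVec]
  set Pc : Matrix (Fin n) (Fin n) ℂ := P.map Complex.ofReal with hPc
  set S : Matrix (Fin n) (Fin n) ℝ := P * B * Bᵀ * P with hS
  set q : ℂ := star v ⬝ᵥ Pc *ᵥ v with hq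
  set s : ℂ := star v ⬝ᵥ (S.map Complex.ofReal) *ᵥ v with hsdef
  set t : ℂ := star v ⬝ᵥ v with ht
  -- transpose facts
  have hPt : Pᵀ = P := hPsymm
  have hric' : Aᵀ * P + P * A + 1 = S := by
    have h := hric
    rw [sub_add_eq_add_sub, sub_eq_zero] at h
    exact h
  have htrans : (B * Bᵀ * P)ᵀ = P * B * Bᵀ := by
    rw [Matrix.transpose_mul, Matrix.transpose_mul, Matrix.transpose_transpose, hPt,
      ← Matrix.mul_assoc]
  -- conjugate transpose of M
  have hMH : Mᴴ = (Aᵀ).map Complex.ofReal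
      - (starRingEnd ℂ lam) • ((P * B * Bᵀ).map Complex.ofReal) := by
    rw [hM, Matrix.conjTranspose_sub, Matrix.conjTranspose_smul, conj_mapC, conj_mapC, htrans]
    rfl
  -- key matrix identity
  have hsum : Mᴴ * Pc + Pc * M
      = (1 - (starRingEnd ℂ lam + lam)) • (S.map Complex.ofReal) - 1 := by
    rw [hMH, hM, hPc, Matrix.sub_mul, Matrix.mul_sub, Matrix.smul_mul, Matrix.mul_smul,
      ← mapC_mul, ← mapC_mul, ← mapC_mul, ← mapC_mul]
    have e1 : P * B * Bᵀ * P = S := rfl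
    have e2 : P * (B * Bᵀ * P) = S := by
      show _ = P * B * Bᵀ * P
      rw [← Matrix.mul_assoc, ← Matrix.mul_assoc]
    rw [show (P * B * Bᵀ) * P = S from e1, e2]
    have e3 : (Aᵀ * P).map Complex.ofReal + (P * A).map Complex.ofReal
        = (S.map Complex.ofReal) - 1 := by
      rw [← Matrix.map_add _ (by simp) (Aᵀ * P) (P * A)]
      have e4 : Aᵀ * P + P * A = S - 1 := eq_sub_of_add_eq hric'
      rw [e4]
      ext i j
      by_cases hij : i = j <;>
        simp [Matrix.map_apply, Matrix.sub_apply, Matrix.one_apply, hij]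
    calc (Aᵀ * P).map Complex.ofReal - starRingEnd ℂ lam • S.map Complex.ofReal
          + ((P * A).map Complex.ofReal - lam • S.map Complex.ofReal)
        = ((Aᵀ * P).map Complex.ofReal + (P * A).map Complex.ofReal)
            - (starRingEnd ℂ lam + lam) • S.map Complex.ofReal := by
          rw [add_smul]; abel
      _ = (1 - (starRingEnd ℂ lam + lam)) • (S.map Complex.ofReal) - 1 := by
          rw [e3, sub_smul, one_smul]; abel
  -- scalar identity
  have h1 : star v ⬝ᵥ Pc *ᵥ (M *ᵥ v) = z * q := by
    rw [hMv, Matrix.mulVec_smul, dotProduct_smul, smul_eq_mul, hq]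
  have h2 : star (M *ᵥ v) ⬝ᵥ Pc *ᵥ v = starRingEnd ℂ z * q := by
    rw [hMv, star_smul, smul_dotProduct, smul_eq_mul, hq]
    rfl
  have h3 : star (M *ᵥ v) ⬝ᵥ (Pc *ᵥ v) + star v ⬝ᵥ (Pc *ᵥ (M *ᵥ v))
      = star v ⬝ᵥ ((Mᴴ * Pc + Pc * M) *ᵥ v) := by
    rw [Matrix.add_mulVec, dotProduct_add, ← Matrix.mulVec_mulVec,
      ← Matrix.mulVec_mulVec, Matrix.dotProduct_mulVec (star v) Mᴴ, ← Matrix.star_mulVec]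
  have key : starRingEnd ℂ z * q + z * q = (1 - (starRingEnd ℂ lam + lam)) * s - t := by
    rw [← h1, ← h2, h3, hsum, Matrix.sub_mulVec, dotProduct_sub,
      Matrix.smul_mulVec, dotProduct_smul, smul_eq_mul, Matrix.one_mulVec,
      hsdef, ht]
  -- take real parts
  have hql : starRingEnd ℂ z * q + z * q = ((2 * z.re : ℝ) : ℂ) * q := by
    rw [← add_mul]
    congr 1
    rw [add_comm]
    exact Complex.add_conj z
  have hlamc : (1 : ℂ) - (starRingEnd ℂ lam + lam) = ((1 - 2 * lam.re : ℝ) : ℂ) := by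
    rw [add_comm, Complex.add_conj]
    push_cast
    ring
  have keyre : 2 * z.re * q.re = (1 - 2 * lam.re) * s.re - t.re := by
    have := congrArg Complex.re (hql ▸ hlamc ▸ key)
    simpa [Complex.re_ofReal_mul, Complex.sub_re] using this
  -- positivity facts
  have hqpos : 0 < q.re := posdef_mapC hP hv
  have hspos : 0 ≤ s.re := by
    have hfact : S.map Complex.ofReal
        = ((Bᵀ * P).map Complex.ofReal)ᴴ * ((Bᵀ * P).map Complex.ofReal) := by
      have hbp : (Bᵀ * P)ᵀ = P * B := by
        rw [Matrix.transpose_mul, hPt, Matrix.transpose_transpose]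
      rw [conj_mapC, hbp, ← mapC_mul]
      show (P * B * Bᵀ * P).map Complex.ofReal = _
      rw [Matrix.mul_assoc (P * B) Bᵀ P]
    have := re_dot_CT_mul_self_nonneg ((Bᵀ * P).map Complex.ofReal) v
    rw [← hfact] at this
    simpa [hsdef] using this
  have htpos : 0 < t.re := star_dot_re_pos hv
  nlinarith [mul_nonneg (by linarith : (0:ℝ) ≤ 2 * lam.re - 1) hspos]
end

section
/- Suppose a matrix X_c satisfies X_c S = A_c X_c + B_c and 0 = C_c X_c + D_c, with A_c Hurwitz. Consider the perturbed closed-loop system ẋ_c = A_c x_c + B_c v + Bδ(t), v̇ = S v, e = C_c x_c + D_c v + D δ_u(t), where δ and δ_u are piecewise continuous functions converging to 0 as t → ∞. Then e(t) → 0 as t → ∞ for all initial conditions. -/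
open Matrix Filter Topology Polynomial intervalIntegral

lemma scalar_decay (a : ℂ) (ha : a.re < 0) (x u : ℝ → ℂ)
    (hx : ∀ t, HasDerivAt x (a * x t + u t) t)
    (hu_cont : Continuous u) (hu : Tendsto u atTop (𝓝 0)) :
    Tendsto x atTop (𝓝 0) := by
  have hxc : Continuous x := continuous_iff_continuousAt.2 fun t => (hx t).continuousAt
  have hane : a.re ≠ 0 := ne_of_lt ha
  set b : ℝ := -a.re with hb
  have hb0 : 0 < b := by simp only [hb]; linarith
  have hce : Continuous fun s : ℝ => Complex.exp (-(a * s)) :=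
    Complex.continuous_exp.comp ((continuous_const.mul Complex.continuous_ofReal).neg)
  have hre : Continuous fun s : ℝ => Real.exp (-(a.re * s)) :=
    Real.continuous_exp.comp ((continuous_const.mul continuous_id).neg)
  have hg : ∀ t : ℝ, HasDerivAt (fun s : ℝ => Complex.exp (-(a * s)) * x s)
      (Complex.exp (-(a * t)) * u t) t := by
    intro t
    have h1 : HasDerivAt (fun s : ℝ => -(a * (s : ℂ))) (-a) t := by
      have h0 : HasDerivAt (fun s : ℝ => ((s : ℂ))) 1 t := by
        simpa using (hasDerivAt_id t).ofReal_comp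
      have h0' := (h0.const_mul a).neg
      simp only [mul_one] at h0'
      exact h0'
    have h2 : HasDerivAt (fun s : ℝ => Complex.exp (-(a * s)))
        (Complex.exp (-(a * t)) * (-a)) t := h1.cexp
    have h3 := h2.mul (hx t)
    refine h3.congr_deriv ?_
    ring
  have key : ∀ ε : ℝ, 0 ≤ ε → ∀ T t : ℝ, T ≤ t → (∀ s, T ≤ s → ‖u s‖ ≤ ε) →
      ‖x t‖ ≤ ‖x T‖ * Real.exp (a.re * (t - T)) + ε / b := by
    intro ε hε T t hTt hus
    have hInt : IntervalIntegrable (fun s : ℝ => Complex.exp (-(a * s)) * u s)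
        MeasureTheory.volume T t := (hce.mul hu_cont).intervalIntegrable T t
    have hftc : ∫ s in T..t, Complex.exp (-(a * s)) * u s =
        Complex.exp (-(a * t)) * x t - Complex.exp (-(a * T)) * x T :=
      integral_eq_sub_of_hasDerivAt (fun s _ => hg s) hInt
    have hxt : x t = Complex.exp (a * t) *
        (Complex.exp (-(a * T)) * x T + ∫ s in T..t, Complex.exp (-(a * s)) * u s) := by
      rw [hftc]
      rw [show Complex.exp (-(a*T)) * x T + (Complex.exp (-(a*t)) * x t
          - Complex.exp (-(a*T)) * x T) = Complex.exp (-(a*t)) * x t by ring]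
      rw [← mul_assoc, ← Complex.exp_add]
      simp
    have hnormint : ‖∫ s in T..t, Complex.exp (-(a * s)) * u s‖ ≤
        ∫ s in T..t, Real.exp (-(a.re * s)) * ε := by
      refine le_trans (norm_integral_le_integral_norm hTt) ?_
      apply integral_mono_on hTt
      · exact ((hce.mul hu_cont).norm).intervalIntegrable T t
      · exact (hre.mul continuous_const).intervalIntegrable T t
      · intro s hs
        rw [norm_mul, Complex.norm_exp]
        have h : (-(a * (s:ℂ))).re = -(a.re * s) := by simp
        rw [h]
        exact mul_le_mul_of_nonneg_left (hus s hs.1) (Real.exp_nonneg _)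
    have hreal : ∫ s in T..t, Real.exp (-(a.re * s)) * ε =
        ε / b * Real.exp (-(a.re * t)) - ε / b * Real.exp (-(a.re * T)) := by
      have hder : ∀ s : ℝ, HasDerivAt (fun s : ℝ => ε / b * Real.exp (-(a.re * s)))
          (Real.exp (-(a.re * s)) * ε) s := by
        intro s
        have h1 : HasDerivAt (fun s : ℝ => -(a.re * s)) (-a.re) s := by
          have h1' := ((hasDerivAt_id s).const_mul a.re).neg
          simp only [mul_one] at h1'
          exact h1'
        have h3 := (h1.exp).const_mul (ε / b)
        refine h3.congr_deriv ?_
        rw [hb]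
        field_simp
      rw [integral_eq_sub_of_hasDerivAt (fun s _ => hder s)
        ((hre.mul continuous_const).intervalIntegrable T t)]
    have h2 : Real.exp (a.re * t) * Real.exp (-(a.re * t)) = 1 := by
      rw [← Real.exp_add]; simp
    have h3 : Real.exp (a.re * t) * Real.exp (-(a.re * T)) = Real.exp (a.re * (t - T)) := by
      rw [← Real.exp_add]; congr 1; ring
    have hxtnorm : ‖x t‖ ≤ Real.exp (a.re * t) *
        (Real.exp (-(a.re * T)) * ‖x T‖ +
          (ε / b * Real.exp (-(a.re * t)) - ε / b * Real.exp (-(a.re * T)))) := by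
      rw [hxt, norm_mul, Complex.norm_exp]
      have hre2 : (a * (t:ℂ)).re = a.re * t := by simp
      rw [hre2]
      apply mul_le_mul_of_nonneg_left _ (Real.exp_nonneg _)
      refine le_trans (norm_add_le _ _) ?_
      gcongr
      · rw [norm_mul, Complex.norm_exp]
        have h : (-(a * (T:ℂ))).re = -(a.re * T) := by simp
        rw [h]
      · exact le_trans hnormint (le_of_eq hreal)
    refine le_trans hxtnorm ?_
    have heq : Real.exp (a.re * t) * (Real.exp (-(a.re * T)) * ‖x T‖ +
          (ε / b * Real.exp (-(a.re * t)) - ε / b * Real.exp (-(a.re * T))))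
        = ‖x T‖ * Real.exp (a.re * (t - T)) + ε / b * (1 - Real.exp (a.re * (t - T))) := by
      linear_combination (‖x T‖ - ε / b) * h3 + (ε / b) * h2
    rw [heq]
    have hk : 0 ≤ ε / b := div_nonneg hε hb0.le
    nlinarith [Real.exp_nonneg (a.re * (t - T))]
  -- conclusion
  rw [Metric.tendsto_atTop]
  intro ε' hε'
  set ε : ℝ := ε' * b / 4 with hεdef
  have hεpos : 0 < ε := by positivity
  obtain ⟨T, hT⟩ := (Metric.tendsto_atTop.mp hu) ε hεpos
  have hus : ∀ s, T ≤ s → ‖u s‖ ≤ ε := by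
    intro s hs
    have := hT s hs
    rw [dist_zero_right] at this
    exact this.le
  have hεb : ε / b = ε' / 4 := by
    rw [hεdef]; field_simp
  -- first term tends to 0
  have hdecay : Tendsto (fun t : ℝ => ‖x T‖ * Real.exp (a.re * (t - T))) atTop (𝓝 0) := by
    have h1 : Tendsto (fun t : ℝ => a.re * (t - T)) atTop atBot := by
      apply Tendsto.neg_mul_atTop ha tendsto_const_nhds
      exact tendsto_atTop_add_const_right _ (-T) tendsto_id
    have h2 : Tendsto (fun t : ℝ => Real.exp (a.re * (t - T))) atTop (𝓝 0) :=
      Real.tendsto_exp_atBot.comp h1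
    simpa using h2.const_mul (‖x T‖)
  obtain ⟨T₂, hT₂⟩ := (Metric.tendsto_atTop.mp hdecay) (ε' / 2) (by positivity)
  refine ⟨max T T₂, fun t ht => ?_⟩
  have htT : T ≤ t := le_trans (le_max_left _ _) ht
  have htT₂ : T₂ ≤ t := le_trans (le_max_right _ _) ht
  have hb1 := key ε hεpos.le T t htT hus
  have hb2 := hT₂ t htT₂
  rw [dist_zero_right] at hb2 ⊢
  have hfirst : ‖x T‖ * Real.exp (a.re * (t - T)) < ε' / 2 := by
    have h := hT₂ t htT₂
    rw [Real.dist_0_eq_abs] at h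
    exact lt_of_abs_lt h
  calc ‖x t‖ ≤ ‖x T‖ * Real.exp (a.re * (t - T)) + ε / b := hb1
    _ < ε' / 2 + ε' / 4 := by rw [hεb]; linarith
    _ < ε' := by linarith

lemma factor_commute {n : ℕ} (M : Matrix (Fin n) (Fin n) ℂ) (μ ν : ℂ) :
    Commute (M - μ • 1) (M - ν • 1) := by
  have h1 : Commute M (ν • (1 : Matrix (Fin n) (Fin n) ℂ)) :=
    (Commute.one_right M).smul_right ν
  have h2 : Commute (μ • (1 : Matrix (Fin n) (Fin n) ℂ)) M :=
    ((Commute.one_right M).smul_right μ).symm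
  have h3 : Commute (μ • (1 : Matrix (Fin n) (Fin n) ℂ)) (ν • (1 : Matrix (Fin n) (Fin n) ℂ)) :=
    (((Commute.refl (1 : Matrix (Fin n) (Fin n) ℂ)).smul_right ν).smul_left μ)
  exact ((Commute.refl M).sub_right h1).sub_left (h2.sub_right h3)

lemma list_decay {n : ℕ} (M : Matrix (Fin n) (Fin n) ℂ) (l : List ℂ)
    (hl : ∀ μ ∈ l, μ.re < 0) :
    ∀ (x u : ℝ → Fin n → ℂ),
    (∀ t i, HasDerivAt (fun s => x s i) ((M.mulVec (x t) + u t) i) t) →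
    (∀ i, Continuous fun t => u t i) →
    (∀ i, Tendsto (fun t => u t i) atTop (𝓝 0)) →
    (∀ t, ((l.map (fun μ => M - μ • 1)).prod).mulVec (x t) = 0) →
    ∀ i, Tendsto (fun t => x t i) atTop (𝓝 0) := by
  induction l with
  | nil =>
    intro x u hx hucont hu hann i
    have hx0 : ∀ t, x t = 0 := by
      intro t
      have := hann t
      simpa [Matrix.one_mulVec] using this
    have : (fun t => x t i) = fun _ => 0 := by
      funext t; rw [hx0 t]; rfl
    rw [this]
    exact tendsto_const_nhds
  | cons μ l' ih =>
    intro x u hx hucont hu hann i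
    have hμ : μ.re < 0 := hl μ (List.mem_cons_self)
    have hl' : ∀ ν ∈ l', ν.re < 0 := fun ν hν => hl ν (List.mem_cons_of_mem μ hν)
    have hxcont : ∀ j, Continuous fun t => x t j :=
      fun j => continuous_iff_continuousAt.2 fun t => (hx t j).continuousAt
    -- z = (M - μ•1) x
    set z : ℝ → Fin n → ℂ := fun t => (M - μ • 1).mulVec (x t) with hz
    set u' : ℝ → Fin n → ℂ := fun t => (M - μ • 1).mulVec (u t) with hu'
    -- componentwise derivative of z
    have hzderiv : ∀ t j, HasDerivAt (fun s => z s j) ((M.mulVec (z t) + u' t) j) t := by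
      intro t j
      have hsum : HasDerivAt (fun s => ∑ k, (M - μ • 1) j k * x s k)
          (∑ k, (M - μ • 1) j k * (M.mulVec (x t) + u t) k) t := by
        apply HasDerivAt.fun_sum
        intro k _
        exact (hx t k).const_mul _
      have heq1 : (fun s => z s j) = fun s => ∑ k, (M - μ • 1) j k * x s k := by
        funext s
        simp [hz, Matrix.mulVec, dotProduct]
      rw [heq1]
      convert hsum using 1
      have : ∑ k, (M - μ • 1) j k * (M.mulVec (x t) + u t) k
          = ((M - μ • 1).mulVec (M.mulVec (x t) + u t)) j := by
        simp [Matrix.mulVec, dotProduct]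
      rw [this, Matrix.mulVec_add]
      have hMM : (M - μ • 1) * M = M * (M - μ • 1) := by
        simp only [Matrix.sub_mul, Matrix.mul_sub, Matrix.smul_mul, Matrix.mul_smul,
          Matrix.one_mul, Matrix.mul_one]
      have hcomm : (M - μ • 1).mulVec (M.mulVec (x t)) = M.mulVec (z t) := by
        rw [Matrix.mulVec_mulVec, hMM, ← Matrix.mulVec_mulVec, hz]
      rw [hcomm]
    -- u' properties
    have hu'cont : ∀ j, Continuous fun t => u' t j := by
      intro j
      have : (fun t => u' t j) = fun t => ∑ k, (M - μ • 1) j k * u t k := by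
        funext t; simp [hu', Matrix.mulVec, dotProduct]
      rw [this]
      exact continuous_finset_sum _ fun k _ => continuous_const.mul (hucont k)
    have hu'lim : ∀ j, Tendsto (fun t => u' t j) atTop (𝓝 0) := by
      intro j
      have heq : (fun t => u' t j) = fun t => ∑ k, (M - μ • 1) j k * u t k := by
        funext t; simp [hu', Matrix.mulVec, dotProduct]
      rw [heq]
      have : Tendsto (fun t => ∑ k, (M - μ • 1) j k * u t k) atTop
          (𝓝 (∑ k : Fin n, (M - μ • 1) j k * 0)) :=
        tendsto_finset_sum _ fun k _ => (hu k).const_mul _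
      simpa using this
    -- annihilation for z
    have hann' : ∀ t, ((l'.map (fun ν => M - ν • 1)).prod).mulVec (z t) = 0 := by
      intro t
      have hcomm : Commute (M - μ • 1) ((l'.map (fun ν => M - ν • 1)).prod) := by
        apply Commute.list_prod_right
        intro y hy
        obtain ⟨ν, _, rfl⟩ := List.mem_map.mp hy
        exact factor_commute M μ ν
      have := hann t
      rw [List.map_cons, List.prod_cons] at this
      rw [hz, Matrix.mulVec_mulVec, ← hcomm.eq]
      exact this
    -- IH gives z → 0
    have hzlim : ∀ j, Tendsto (fun t => z t j) atTop (𝓝 0) :=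
      ih hl' z u' hzderiv hu'cont hu'lim hann'
    have hzcont : ∀ j, Continuous fun t => z t j :=
      fun j => continuous_iff_continuousAt.2 fun t => (hzderiv t j).continuousAt
    -- scalar equation for x i
    apply scalar_decay μ hμ _ (fun t => z t i + u t i)
    · intro t
      have h := hx t i
      convert h using 1
      have : (M.mulVec (x t)) i = μ * x t i + z t i := by
        simp only [hz, Matrix.sub_mulVec, Matrix.smul_mulVec, Matrix.one_mulVec,
          Pi.sub_apply, Pi.smul_apply, smul_eq_mul]
        ring
      simp only [Pi.add_apply, this]
      ring
    · exact (hzcont i).add (hucont i)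
    · simpa using (hzlim i).add (hu i)


lemma root_mem_spectrum {n : ℕ} (M : Matrix (Fin n) (Fin n) ℂ) (μ : ℂ)
    (h : μ ∈ M.charpoly.roots) : μ ∈ spectrum ℂ M := by
  have hroot : M.charpoly.IsRoot μ := (Polynomial.mem_roots'.mp h).2
  rw [spectrum.mem_iff]
  rw [Matrix.isUnit_iff_isUnit_det]
  have hdet : (algebraMap ℂ (Matrix (Fin n) (Fin n) ℂ) μ - M).det = M.charpoly.eval μ := by
    have hmap : (charmatrix M).map (Polynomial.evalRingHom μ)
        = algebraMap ℂ (Matrix (Fin n) (Fin n) ℂ) μ - M := by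
      ext i j
      by_cases hij : i = j
      · subst hij
        simp [charmatrix_apply_eq, Matrix.algebraMap_matrix_apply]
      · simp [charmatrix_apply_ne _ _ _ hij, Matrix.algebraMap_matrix_apply, hij]
    rw [← hmap]
    show _ = (Polynomial.evalRingHom μ) M.charmatrix.det
    rw [RingHom.map_det]
    rfl
  rw [hdet, hroot]
  simp

lemma charpoly_prod_eq_zero {n : ℕ} (M : Matrix (Fin n) (Fin n) ℂ) :
    ((M.charpoly.roots.toList.map (fun μ => M - μ • 1)).prod) = 0 := by
  have hsplit : M.charpoly.Splits := IsAlgClosed.splits M.charpoly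
  have hfac := hsplit.eq_prod_roots_of_monic (Matrix.charpoly_monic M)
  have hlist : M.charpoly = ((M.charpoly.roots.toList).map (fun a => X - C a)).prod := by
    have hc : ((M.charpoly.roots.toList).map (fun a => X - C a)).prod
        = (Multiset.map (fun a => X - C a) M.charpoly.roots).prod := by
      conv_rhs => rw [← Multiset.coe_toList M.charpoly.roots]
      rw [Multiset.map_coe, Multiset.prod_coe]
    rw [hc]
    exact hfac
  have h0 : (Polynomial.aeval M) M.charpoly = 0 := Matrix.aeval_self_charpoly M
  rw [hlist, map_list_prod, List.map_map] at h0
  rw [show (fun μ : ℂ => M - μ • 1) = ((Polynomial.aeval M) ∘ fun a : ℂ => X - C a) from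
    funext fun a => by simp [Algebra.algebraMap_eq_smul_one]]
  exact h0

/-- Robustness of output regulation to vanishing perturbations: if `X_c`
solves the Sylvester-type equations and `A_c` is Hurwitz, then the perturbed
closed-loop system with vanishing inputs `δ, δ_u` still regulates the error. -/
theorem output_regulation_vanishing_perturbation
    {nc q p m : ℕ}
    (Ac : Matrix (Fin nc) (Fin nc) ℝ) (Bc : Matrix (Fin nc) (Fin q) ℝ)
    (Cc : Matrix (Fin p) (Fin nc) ℝ) (Dc : Matrix (Fin p) (Fin q) ℝ)
    (S : Matrix (Fin q) (Fin q) ℝ)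
    (B : Matrix (Fin nc) (Fin nc) ℝ) (D : Matrix (Fin p) (Fin m) ℝ)
    (hAc : IsHurwitz Ac)
    (Xc : Matrix (Fin nc) (Fin q) ℝ)
    (hX1 : Xc * S = Ac * Xc + Bc)
    (hX2 : (0 : Matrix (Fin p) (Fin q) ℝ) = Cc * Xc + Dc)
    (δ : ℝ → Fin nc → ℝ) (δu : ℝ → Fin m → ℝ)
    (hδ_cont : Continuous δ) (hδu_cont : Continuous δu)
    (hδ : Tendsto δ atTop (𝓝 0)) (hδu : Tendsto δu atTop (𝓝 0))
    (xc : ℝ → Fin nc → ℝ) (v : ℝ → Fin q → ℝ) (e : ℝ → Fin p → ℝ)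
    (hxc : ∀ t, HasDerivAt xc (Ac.mulVec (xc t) + Bc.mulVec (v t) + B.mulVec (δ t)) t)
    (hv : ∀ t, HasDerivAt v (S.mulVec (v t)) t)
    (he : ∀ t, e t = Cc.mulVec (xc t) + Dc.mulVec (v t) + D.mulVec (δu t)) :
    Tendsto e atTop (𝓝 0) := by
  classical
  set M : Matrix (Fin nc) (Fin nc) ℂ := Ac.map Complex.ofReal with hM
  set l : List ℂ := M.charpoly.roots.toList with hldef
  have hroots : ∀ μ ∈ l, μ.re < 0 := by
    intro μ hμ
    exact hAc μ (root_mem_spectrum M μ ((Multiset.mem_toList).mp hμ))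
  -- the error coordinate
  set xb : ℝ → Fin nc → ℝ := fun t => xc t - Xc.mulVec (v t) with hxb
  -- derivative of xb
  have hxbderiv : ∀ t, ∀ i, HasDerivAt (fun s => xb s i)
      ((Ac.mulVec (xb t) + B.mulVec (δ t)) i) t := by
    intro t i
    have hxci : HasDerivAt (fun s => xc s i)
        ((Ac.mulVec (xc t) + Bc.mulVec (v t) + B.mulVec (δ t)) i) t :=
      (hasDerivAt_pi.mp (hxc t)) i
    have hXv : HasDerivAt (fun s => (Xc.mulVec (v s)) i)
        ((Xc.mulVec (S.mulVec (v t))) i) t := by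
      have heq : (fun s => (Xc.mulVec (v s)) i) = fun s => ∑ j, Xc i j * v s j := by
        funext s; simp [Matrix.mulVec, dotProduct]
      rw [heq]
      have hsum : HasDerivAt (fun s => ∑ j, Xc i j * v s j)
          (∑ j, Xc i j * (S.mulVec (v t)) j) t := by
        apply HasDerivAt.fun_sum
        intro j _
        exact ((hasDerivAt_pi.mp (hv t)) j).const_mul _
      convert hsum using 1
      simp [Matrix.mulVec, dotProduct]
    have h := hxci.sub hXv
    have hval : (Ac.mulVec (xc t) + Bc.mulVec (v t) + B.mulVec (δ t)) i
        - (Xc.mulVec (S.mulVec (v t))) i = (Ac.mulVec (xb t) + B.mulVec (δ t)) i := by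
      have hvec : Ac.mulVec (xb t) + B.mulVec (δ t)
          = Ac.mulVec (xc t) + Bc.mulVec (v t) + B.mulVec (δ t)
            - Xc.mulVec (S.mulVec (v t)) := by
        rw [hxb]
        simp only
        rw [Matrix.mulVec_sub, Matrix.mulVec_mulVec, Matrix.mulVec_mulVec, hX1,
          Matrix.add_mulVec, ← Matrix.mulVec_mulVec]
        abel
      rw [hvec]
      simp
    rw [← hval]
    exact h
  -- complexify
  set z : ℝ → Fin nc → ℂ := fun t i => ((xb t i : ℝ) : ℂ) with hzdef
  set w : ℝ → Fin nc → ℂ := fun t i => (((B.mulVec (δ t)) i : ℝ) : ℂ) with hwdef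
  have hzderiv : ∀ t i, HasDerivAt (fun s => z s i) ((M.mulVec (z t) + w t) i) t := by
    intro t i
    have h := (hxbderiv t i).ofReal_comp
    convert h using 1
    simp only [hzdef, hwdef, hM, Pi.add_apply, Matrix.mulVec, dotProduct,
      Matrix.map_apply]
    push_cast
    ring
  have hwcont : ∀ i, Continuous fun t => w t i := by
    intro i
    apply Complex.continuous_ofReal.comp
    have : (fun t => (B.mulVec (δ t)) i) = fun t => ∑ j, B i j * δ t j := by
      funext t; simp [Matrix.mulVec, dotProduct]
    rw [this]
    exact continuous_finset_sum _ fun j _ =>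
      continuous_const.mul ((continuous_apply j).comp hδ_cont)
  have hδcomp : ∀ j, Tendsto (fun t => δ t j) atTop (𝓝 0) := by
    intro j
    have := (tendsto_pi_nhds.mp hδ) j
    simpa using this
  have hwlim : ∀ i, Tendsto (fun t => w t i) atTop (𝓝 0) := by
    intro i
    have h1 : Tendsto (fun t => (B.mulVec (δ t)) i) atTop (𝓝 0) := by
      have heq : (fun t => (B.mulVec (δ t)) i) = fun t => ∑ j, B i j * δ t j := by
        funext t; simp [Matrix.mulVec, dotProduct]
      rw [heq]
      have := tendsto_finset_sum (Finset.univ : Finset (Fin nc))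
        (fun j _ => (hδcomp j).const_mul (B i j))
      simpa using this
    have h2 := (Complex.continuous_ofReal.tendsto 0).comp h1
    simpa [hwdef, Function.comp_def] using h2
  -- annihilation
  have hann : ∀ t, ((l.map (fun μ => M - μ • 1)).prod).mulVec (z t) = 0 := by
    intro t
    rw [hldef, charpoly_prod_eq_zero M, Matrix.zero_mulVec]
  -- apply the main decay lemma
  have hzlim : ∀ i, Tendsto (fun t => z t i) atTop (𝓝 0) :=
    list_decay M l hroots z w hzderiv hwcont hwlim hann
  have hxblim : ∀ i, Tendsto (fun t => xb t i) atTop (𝓝 0) := by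
    intro i
    have h := (Complex.continuous_re.tendsto 0).comp (hzlim i)
    simpa [hzdef, Function.comp_def] using h
  have hδucomp : ∀ j, Tendsto (fun t => δu t j) atTop (𝓝 0) := by
    intro j
    have := (tendsto_pi_nhds.mp hδu) j
    simpa using this
  -- rewrite e
  have he' : ∀ t, e t = Cc.mulVec (xb t) + D.mulVec (δu t) := by
    intro t
    rw [he t, hxb]
    simp only
    rw [Matrix.mulVec_sub, Matrix.mulVec_mulVec]
    have h0 : Cc * Xc = -Dc := eq_neg_of_add_eq_zero_left hX2.symm
    rw [h0]
    simp only [Matrix.neg_mulVec]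
    abel
  rw [tendsto_pi_nhds]
  intro i
  have heqi : (fun t => e t i) = fun t => (∑ j, Cc i j * xb t j) + ∑ j, D i j * δu t j := by
    funext t
    rw [he' t]
    simp [Matrix.mulVec, dotProduct]
  rw [heqi]
  have h1 : Tendsto (fun t => ∑ j, Cc i j * xb t j) atTop (𝓝 0) := by
    have := tendsto_finset_sum (Finset.univ : Finset (Fin nc))
      (fun j _ => (hxblim j).const_mul (Cc i j))
    simpa using this
  have h2 : Tendsto (fun t => ∑ j, D i j * δu t j) atTop (𝓝 0) := by
    have := tendsto_finset_sum (Finset.univ : Finset (Fin m))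
      (fun j _ => (hδucomp j).const_mul (D i j))
    simpa using this
  simpa using h1.add h2
end

section
/- Let H ∈ ℝ^{N×N} have all eigenvalues with positive real part, let δ = min_i Re(λ_i(H)) > 0, let S ∈ ℝ^{q×q} and C₀ ∈ ℝ^{p₀×q} with (C₀, S) detectable, and let P be the positive definite solution of P Sᵀ + S P − P C₀ᵀ C₀ P + I_q = 0. Then for any μ ≥ δ^{-1}, the matrix (I_N ⊗ S) − μ (H ⊗ P C₀ᵀ C₀) is Hurwitz. -/
open Matrix Kronecker

def IsHurwitzK {N q : ℕ} (M : Matrix (Fin N × Fin q) (Fin N × Fin q) ℝ) : Prop :=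
  ∀ z ∈ spectrum ℂ (M.map Complex.ofReal), z.re < 0

/-- Detectability of `(C₀, S)` via the Hautus test. -/
def Detectable {q p₀ : ℕ} (C₀ : Matrix (Fin p₀) (Fin q) ℝ) (S : Matrix (Fin q) (Fin q) ℝ) :
    Prop :=
  ∀ lam : ℂ, 0 ≤ lam.re →
    (Matrix.fromRows (lam • (1 : Matrix (Fin q) (Fin q) ℂ) - S.map Complex.ofReal)
      (C₀.map Complex.ofReal)).rank = q

section Helpers

lemma kron_sub' {l m n p : Type*} (A : Matrix l m ℂ) (B C : Matrix n p ℂ) :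
    A ⊗ₖ (B - C) = A ⊗ₖ B - A ⊗ₖ C := by
  ext i j
  simp [Matrix.kroneckerMap_apply, mul_sub]

lemma cmap_smul {m n : Type*} (r : ℝ) (A : Matrix m n ℝ) :
    (r • A).map Complex.ofReal = (r : ℂ) • (A.map Complex.ofReal) := by
  ext i j; simp [Matrix.map_apply]

lemma cmap_mul {m n p : Type*} [Fintype n] [DecidableEq n] (A : Matrix m n ℝ) (B : Matrix n p ℝ) :
    (A * B).map Complex.ofReal = A.map Complex.ofReal * B.map Complex.ofReal := by
  ext i j; simp [Matrix.mul_apply, Matrix.map_apply]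

lemma cmap_one {n : Type*} [Fintype n] [DecidableEq n] :
    (1 : Matrix n n ℝ).map Complex.ofReal = 1 := by
  ext i j; by_cases h : i = j <;> simp [Matrix.one_apply, h]

lemma cmap_transpose {m n : Type*} (A : Matrix m n ℝ) :
    (Aᵀ).map Complex.ofReal = (A.map Complex.ofReal)ᵀ := rfl

lemma cmap_conjTranspose {m n : Type*} (A : Matrix m n ℝ) :
    (A.map Complex.ofReal)ᴴ = (Aᵀ).map Complex.ofReal := by
  ext i j; simp [Matrix.conjTranspose_apply, Matrix.map_apply, Complex.conj_ofReal]

lemma cmap_kron {N q : ℕ} (A : Matrix (Fin N) (Fin N) ℝ) (B : Matrix (Fin q) (Fin q) ℝ) :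
    (A ⊗ₖ B).map Complex.ofReal = (A.map Complex.ofReal) ⊗ₖ (B.map Complex.ofReal) := by
  ext i j; simp [Matrix.kroneckerMap_apply, Matrix.map_apply]

lemma cmap_det {n : Type*} [Fintype n] [DecidableEq n] (A : Matrix n n ℝ) :
    (A.map Complex.ofReal).det = Complex.ofReal A.det := by
  have := RingHom.map_det Complex.ofRealHom A
  exact this.symm

lemma mem_spectrum_iff_det {n : Type*} [Fintype n] [DecidableEq n] (A : Matrix n n ℂ) (z : ℂ) :
    z ∈ spectrum ℂ A ↔ (z • (1 : Matrix n n ℂ) - A).det = 0 := by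
  rw [spectrum.mem_iff, Matrix.isUnit_iff_isUnit_det, isUnit_iff_ne_zero, not_ne_iff,
    Algebra.algebraMap_eq_smul_one]

lemma dot_star_self_eq {n : Type*} [Fintype n] (w : n → ℂ) :
    star w ⬝ᵥ w = ((∑ i, Complex.normSq (w i) : ℝ) : ℂ) := by
  simp [dotProduct, Complex.normSq_eq_conj_mul_self]

lemma sum_normSq_pos {n : Type*} [Fintype n] {w : n → ℂ} (hw : w ≠ 0) :
    0 < ∑ i, Complex.normSq (w i) := by
  obtain ⟨i, hi⟩ : ∃ i, w i ≠ 0 := by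
    by_contra h; push_neg at h; exact hw (funext h)
  exact Finset.sum_pos' (fun j _ => Complex.normSq_nonneg _)
    ⟨i, Finset.mem_univ i, Complex.normSq_pos.2 hi⟩

lemma det_conj_unit {n : Type*} [Fintype n] [DecidableEq n] (U A : Matrix n n ℂ)
    (hU : IsUnit U.det) : (U⁻¹ * A * U).det = A.det := by
  have h0 : U.det ≠ 0 := (isUnit_iff_ne_zero).1 hU
  rw [Matrix.det_mul, Matrix.det_mul, Matrix.det_nonsing_inv, Ring.inverse_eq_inv']
  field_simp

lemma cmap_add {m n : Type*} (A B : Matrix m n ℝ) :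
    (A + B).map Complex.ofReal = A.map Complex.ofReal + B.map Complex.ofReal := by
  ext i j; simp [Matrix.map_apply]

lemma cmap_sub {m n : Type*} (A B : Matrix m n ℝ) :
    (A - B).map Complex.ofReal = A.map Complex.ofReal - B.map Complex.ofReal := by
  ext i j; simp [Matrix.map_apply]

lemma sum_normSq_nonneg {n : Type*} [Fintype n] (w : n → ℂ) :
    0 ≤ ∑ i, Complex.normSq (w i) :=
  Finset.sum_nonneg fun j _ => Complex.normSq_nonneg _

def eqB0 {N q : ℕ} (k : Fin (N+1)) :
    Fin q ≃ {p : Fin (N+1) × Fin q // (if p.1 = k then (0:ℕ) else 1) = 0} where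
  toFun x := ⟨(k, x), by simp⟩
  invFun p := p.1.2
  left_inv x := rfl
  right_inv := by
    rintro ⟨⟨i, a'⟩, hp⟩
    have hik : i = k := by
      by_contra h
      rw [if_neg h] at hp
      omega
    subst hik; rfl

@[simp] lemma eqB0_coe {N q : ℕ} (k : Fin (N+1)) (x : Fin q) :
    ((eqB0 (N := N) k x : {p : Fin (N+1) × Fin q // (if p.1 = k then (0:ℕ) else 1) = 0}) :
      Fin (N+1) × Fin q) = (k, x) := rfl

def eqB1 {N q : ℕ} (k : Fin (N+1)) :
    (Fin N × Fin q) ≃ {p : Fin (N+1) × Fin q // (if p.1 = k then (0:ℕ) else 1) = 1} where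
  toFun x := ⟨(k.succAbove x.1, x.2), by simp [Fin.succAbove_ne]⟩
  invFun p := ((finSuccAboveEquiv k).symm ⟨p.1.1, fun h => by
      have hp := p.2; rw [if_pos h] at hp; exact zero_ne_one hp⟩, p.1.2)
  left_inv := by
    rintro ⟨j, a'⟩
    have h : (⟨k.succAbove j, Fin.succAbove_ne k j⟩ : {i : Fin (N+1) // i ≠ k}) =
        finSuccAboveEquiv k j := by rw [finSuccAboveEquiv_apply]
    simp only [h, Equiv.symm_apply_apply]
  right_inv := by
    rintro ⟨⟨i, a'⟩, hp⟩
    have hik : i ≠ k := by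
      intro h; rw [if_pos h] at hp; exact zero_ne_one hp
    have h2 := Equiv.apply_symm_apply (finSuccAboveEquiv k) ⟨i, hik⟩
    have h3 : k.succAbove ((finSuccAboveEquiv k).symm ⟨i, hik⟩) = i := by
      have := congrArg Subtype.val h2
      rwa [finSuccAboveEquiv_apply] at this
    exact Subtype.ext (Prod.ext h3 rfl)

@[simp] lemma eqB1_coe {N q : ℕ} (k : Fin (N+1)) (x : Fin N × Fin q) :
    ((eqB1 k x : {p : Fin (N+1) × Fin q // (if p.1 = k then (0:ℕ) else 1) = 1}) :
      Fin (N+1) × Fin q) = (k.succAbove x.1, x.2) := rfl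

def eqF1 {N : ℕ} (k : Fin (N+1)) :
    Fin N ≃ {i : Fin (N+1) // (if i = k then (0:ℕ) else 1) = 1} where
  toFun j := ⟨k.succAbove j, by simp [Fin.succAbove_ne]⟩
  invFun p := (finSuccAboveEquiv k).symm ⟨p.1, fun h => by
      have hp := p.2; rw [if_pos h] at hp; exact zero_ne_one hp⟩
  left_inv := by
    intro j
    have h : (⟨k.succAbove j, Fin.succAbove_ne k j⟩ : {i : Fin (N+1) // i ≠ k}) =
        finSuccAboveEquiv k j := by rw [finSuccAboveEquiv_apply]
    simp only [h, Equiv.symm_apply_apply]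
  right_inv := by
    rintro ⟨i, hp⟩
    have hik : i ≠ k := by
      intro h; rw [if_pos h] at hp; exact zero_ne_one hp
    have h2 := Equiv.apply_symm_apply (finSuccAboveEquiv k) ⟨i, hik⟩
    have h3 : k.succAbove ((finSuccAboveEquiv k).symm ⟨i, hik⟩) = i := by
      have := congrArg Subtype.val h2
      rwa [finSuccAboveEquiv_apply] at this
    exact Subtype.ext h3

@[simp] lemma eqF1_coe {N : ℕ} (k : Fin (N+1)) (x : Fin N) :
    ((eqF1 k x : {i : Fin (N+1) // (if i = k then (0:ℕ) else 1) = 1}) : Fin (N+1)) =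
      k.succAbove x := rfl

lemma key_lemma (q : ℕ) :
    ∀ (N : ℕ) (H : Matrix (Fin N) (Fin N) ℂ) (B₀ B₁ : Matrix (Fin q) (Fin q) ℂ),
      ((1 : Matrix (Fin N) (Fin N) ℂ) ⊗ₖ B₀ + H ⊗ₖ B₁).det = 0 →
      ∃ l : ℂ, (l • (1 : Matrix (Fin N) (Fin N) ℂ) - H).det = 0 ∧ (B₀ + l • B₁).det = 0 := by
  intro N
  induction N with
  | zero =>
    intro H B₀ B₁ h
    rw [Matrix.det_isEmpty] at h
    exact absurd h one_ne_zero
  | succ N ih =>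
    intro H B₀ B₁ hdet
    obtain ⟨l, hlmem⟩ :=
      spectrum.nonempty_of_isAlgClosed_of_finiteDimensional (𝕜 := ℂ) H
    have hl : (l • (1 : Matrix (Fin (N+1)) (Fin (N+1)) ℂ) - H).det = 0 :=
      (mem_spectrum_iff_det _ _).1 hlmem
    obtain ⟨v, hv0, hveq⟩ := (Matrix.exists_mulVec_eq_zero_iff).2 hl
    have hHv : H *ᵥ v = l • v := by
      rw [Matrix.sub_mulVec, Matrix.smul_mulVec, Matrix.one_mulVec, sub_eq_zero] at hveq
      exact hveq.symm
    obtain ⟨k, hk⟩ : ∃ k, v k ≠ 0 := by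
      by_contra h; push_neg at h; exact hv0 (funext h)
    set U : Matrix (Fin (N+1)) (Fin (N+1)) ℂ := (1 : Matrix _ _ ℂ).updateCol k v with hUdef
    have hdetU : U.det = v k := by
      rw [hUdef, ← Matrix.cramer_apply, Matrix.cramer_one]
      rfl
    have hUunit : IsUnit U.det := by rw [hdetU]; exact isUnit_iff_ne_zero.2 hk
    have hUU : U⁻¹ * U = 1 := Matrix.nonsing_inv_mul U hUunit
    set H₂ : Matrix (Fin (N+1)) (Fin (N+1)) ℂ := U⁻¹ * H * U with hH₂
    have hUe : U *ᵥ (Pi.single k 1 : Fin (N+1) → ℂ) = v := by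
      funext i
      simp [Matrix.mulVec_single, hUdef, Matrix.updateCol_apply]
    have hcol : ∀ i, H₂ i k = l * (Pi.single k 1 : Fin (N+1) → ℂ) i := by
      have h1 : H₂ *ᵥ (Pi.single k 1 : Fin (N+1) → ℂ) =
          l • (Pi.single k 1 : Fin (N+1) → ℂ) := by
        rw [hH₂, ← Matrix.mulVec_mulVec, ← Matrix.mulVec_mulVec, hUe, hHv,
          Matrix.mulVec_smul, ← hUe, Matrix.mulVec_mulVec, hUU, Matrix.one_mulVec]
      intro i
      have h2 := congrFun h1 i
      simpa [Matrix.mulVec_single] using h2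
    have hH2kk : H₂ k k = l := by simpa using hcol k
    set M₂ : Matrix (Fin (N+1) × Fin q) (Fin (N+1) × Fin q) ℂ :=
      (1 : Matrix (Fin (N+1)) (Fin (N+1)) ℂ) ⊗ₖ B₀ + H₂ ⊗ₖ B₁ with hM₂def
    have hconj : ∀ (X : Matrix (Fin (N+1)) (Fin (N+1)) ℂ) (Y : Matrix (Fin q) (Fin q) ℂ),
        (U⁻¹ ⊗ₖ (1 : Matrix (Fin q) (Fin q) ℂ)) * (X ⊗ₖ Y) *
          (U ⊗ₖ (1 : Matrix (Fin q) (Fin q) ℂ)) = (U⁻¹ * X * U) ⊗ₖ Y := by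
      intro X Y
      rw [← Matrix.mul_kronecker_mul, ← Matrix.mul_kronecker_mul, Matrix.one_mul,
        Matrix.mul_one]
    have hfact : M₂ = ((U⁻¹) ⊗ₖ (1 : Matrix (Fin q) (Fin q) ℂ)) *
        ((1 : Matrix (Fin (N+1)) (Fin (N+1)) ℂ) ⊗ₖ B₀ + H ⊗ₖ B₁) *
        (U ⊗ₖ (1 : Matrix (Fin q) (Fin q) ℂ)) := by
      rw [Matrix.mul_add, Matrix.add_mul, hconj, hconj, Matrix.mul_one, hUU, hM₂def, hH₂]
    have hdetM₂ : M₂.det = 0 := by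
      rw [hfact, Matrix.det_mul, Matrix.det_mul, hdet, mul_zero, zero_mul]
    have hBT : M₂.BlockTriangular (fun p => if p.1 = k then (0:ℕ) else 1) := by
      intro x y hxy
      dsimp only at hxy
      have hy : y.1 = k := by
        by_contra h
        rw [if_neg h] at hxy
        split at hxy <;> omega
      have hx : x.1 ≠ k := by
        intro h
        rw [if_pos h, if_pos hy] at hxy
        omega
      have hxyne : x.1 ≠ y.1 := by rw [hy]; exact hx
      simp [hM₂def, Matrix.add_apply, Matrix.kroneckerMap_apply, Matrix.one_apply,
        Prod.ext_iff, hxyne, hy, hcol, Pi.single_apply, hx]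
    have hprod := hBT.det
    rw [hdetM₂] at hprod
    obtain ⟨a, hamem, ha⟩ := Finset.prod_eq_zero_iff.1 hprod.symm
    have ha01 : a = 0 ∨ a = 1 := by
      obtain ⟨p, -, hp⟩ := Finset.mem_image.1 hamem
      split at hp <;> omega
    rcases ha01 with ha0 | ha1
    · subst ha0
      refine ⟨l, hl, ?_⟩
      have hblock : (M₂.toSquareBlock (fun p => if p.1 = k then (0:ℕ) else 1) 0).submatrix
          (eqB0 k) (eqB0 k) = B₀ + l • B₁ := by
        ext x y
        simp [Matrix.toSquareBlock_def, hM₂def, Matrix.kroneckerMap_apply, Matrix.one_apply,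
          hH2kk]
      rw [← Matrix.det_submatrix_equiv_self (eqB0 k), hblock] at ha
      exact ha
    · subst ha1
      set H₃ : Matrix (Fin N) (Fin N) ℂ := H₂.submatrix k.succAbove k.succAbove with hH₃
      have hblock : (M₂.toSquareBlock (fun p => if p.1 = k then (0:ℕ) else 1) 1).submatrix
          (eqB1 k) (eqB1 k) = (1 : Matrix (Fin N) (Fin N) ℂ) ⊗ₖ B₀ + H₃ ⊗ₖ B₁ := by
        ext x y
        simp [Matrix.toSquareBlock_def, hM₂def, Matrix.kroneckerMap_apply, Matrix.one_apply,
          hH₃, Fin.succAbove_right_inj, Prod.ext_iff]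
      have hdet3 : ((1 : Matrix (Fin N) (Fin N) ℂ) ⊗ₖ B₀ + H₃ ⊗ₖ B₁).det = 0 := by
        rw [← hblock, Matrix.det_submatrix_equiv_self]
        exact ha
      obtain ⟨l', hl'H₃, hl'B⟩ := ih H₃ B₀ B₁ hdet3
      refine ⟨l', ?_, hl'B⟩
      have hsim : (l' • (1 : Matrix (Fin (N+1)) (Fin (N+1)) ℂ) - H).det =
          (l' • (1 : Matrix (Fin (N+1)) (Fin (N+1)) ℂ) - H₂).det := by
        have hEq : l' • (1 : Matrix (Fin (N+1)) (Fin (N+1)) ℂ) - H₂ =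
            U⁻¹ * (l' • (1 : Matrix (Fin (N+1)) (Fin (N+1)) ℂ) - H) * U := by
          rw [Matrix.mul_sub, Matrix.sub_mul, hH₂]
          congr 1
          rw [Matrix.mul_smul, Matrix.mul_one, Matrix.smul_mul, hUU]
        rw [hEq, det_conj_unit _ _ hUunit]
      rcases Nat.eq_zero_or_pos N with hN | hN
      · exfalso
        subst hN
        rw [Matrix.det_isEmpty] at hl'H₃
        exact one_ne_zero hl'H₃
      have hBT2 : (l' • (1 : Matrix (Fin (N+1)) (Fin (N+1)) ℂ) - H₂).BlockTriangular
          (fun i => if i = k then (0:ℕ) else 1) := by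
        intro x y hxy
        dsimp only at hxy
        have hy : y = k := by
          by_contra h
          rw [if_neg h] at hxy
          split at hxy <;> omega
        have hx : x ≠ k := by
          intro h
          rw [if_pos h, if_pos hy] at hxy
          omega
        subst hy
        simp [Matrix.sub_apply, Matrix.one_apply, hx, hcol, Pi.single_apply]
      have hblk2 : (((l' • (1 : Matrix (Fin (N+1)) (Fin (N+1)) ℂ) - H₂).toSquareBlock
          (fun i => if i = k then (0:ℕ) else 1) 1)).det = 0 := by
        rw [← Matrix.det_submatrix_equiv_self (eqF1 k)]
        have hEq2 : ((l' • (1 : Matrix (Fin (N+1)) (Fin (N+1)) ℂ) - H₂).toSquareBlock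
            (fun i => if i = k then (0:ℕ) else 1) 1).submatrix (eqF1 k) (eqF1 k) =
            l' • (1 : Matrix (Fin N) (Fin N) ℂ) - H₃ := by
          ext x y
          simp [Matrix.toSquareBlock_def, Matrix.sub_apply, Matrix.one_apply, hH₃,
            Fin.succAbove_right_inj]
        rw [hEq2]
        exact hl'H₃
      have h1mem : (1 : ℕ) ∈ Finset.image (fun i => if i = k then (0:ℕ) else 1)
          Finset.univ := by
        have hnt : Nontrivial (Fin (N+1)) := by
          constructor
          exact ⟨⟨0, by omega⟩, ⟨1, by omega⟩, by simp [Fin.ext_iff]⟩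
        obtain ⟨i₀, hi₀⟩ := exists_ne k
        exact Finset.mem_image.2 ⟨i₀, Finset.mem_univ _, by simp [hi₀]⟩
      rw [hsim, hBT2.det]
      exact Finset.prod_eq_zero h1mem hblk2

open scoped MatrixOrder in
lemma lyap_lemma {q p₀ : ℕ} (S : Matrix (Fin q) (Fin q) ℝ) (C₀ : Matrix (Fin p₀) (Fin q) ℝ)
    (P : Matrix (Fin q) (Fin q) ℝ) (hPsymm : P.IsSymm) (hP : P.PosDef)
    (hric : P * Sᵀ + S * P - P * C₀ᵀ * C₀ * P + 1 = 0)
    (c : ℂ) (hc : 1 ≤ c.re) (z : ℂ)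
    (hz : (z • (1 : Matrix (Fin q) (Fin q) ℂ)
        - (S.map Complex.ofReal - c • ((P * C₀ᵀ * C₀).map Complex.ofReal))).det = 0) :
    z.re < 0 := by
  set Sc : Matrix (Fin q) (Fin q) ℂ := S.map Complex.ofReal with hSc
  set Cc : Matrix (Fin p₀) (Fin q) ℂ := C₀.map Complex.ofReal with hCc
  set Pc : Matrix (Fin q) (Fin q) ℂ := P.map Complex.ofReal with hPc
  have hPdet : IsUnit P.det := isUnit_iff_ne_zero.2 hP.det_pos.ne'
  have hPiP : P⁻¹ * P = 1 := Matrix.nonsing_inv_mul P hPdet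
  have hPPi : P * P⁻¹ = 1 := Matrix.mul_nonsing_inv P hPdet
  set Qc : Matrix (Fin q) (Fin q) ℂ := (P⁻¹).map Complex.ofReal with hQc
  have hQP : Qc * Pc = 1 := by rw [hQc, hPc, ← cmap_mul, hPiP, cmap_one]
  have hPQ : Pc * Qc = 1 := by rw [hQc, hPc, ← cmap_mul, hPPi, cmap_one]
  -- complexified Riccati equation
  have hricC : Pc * Scᵀ + Sc * Pc - Pc * Ccᵀ * Cc * Pc + 1 = 0 := by
    have h : (P * Sᵀ + S * P - P * C₀ᵀ * C₀ * P + 1).map Complex.ofReal = 0 := by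
      rw [hric]
      ext i j
      simp [Matrix.map_apply]
    rw [← h, cmap_add, cmap_sub, cmap_add, cmap_one, cmap_mul, cmap_mul, cmap_mul, cmap_mul,
      cmap_mul, cmap_transpose, cmap_transpose]
  -- Lyapunov-type identity for Q = P⁻¹
  have hQPX : ∀ X : Matrix (Fin q) (Fin q) ℂ, Qc * (Pc * X) = X := fun X => by
    rw [← Matrix.mul_assoc, hQP, Matrix.one_mul]
  have e1 : Qc * (Pc * Scᵀ) * Qc = Scᵀ * Qc := by
    rw [← Matrix.mul_assoc, hQP, Matrix.one_mul]
  have e2 : Qc * (Sc * Pc) * Qc = Qc * Sc := by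
    rw [Matrix.mul_assoc, Matrix.mul_assoc, hPQ, Matrix.mul_one]
  have e3 : Qc * (Pc * Ccᵀ * Cc * Pc) * Qc = Ccᵀ * Cc := by
    calc Qc * (Pc * Ccᵀ * Cc * Pc) * Qc = Qc * Pc * Ccᵀ * (Cc * (Pc * Qc)) := by
          simp only [Matrix.mul_assoc]
      _ = Ccᵀ * Cc := by rw [hQP, hPQ, Matrix.one_mul, Matrix.mul_one]
  have e4 : Qc * (1 : Matrix (Fin q) (Fin q) ℂ) * Qc = Qc * Qc := by rw [Matrix.mul_one]
  have hexp2 : Qc * (Pc * Scᵀ + Sc * Pc - Pc * Ccᵀ * Cc * Pc + 1) * Qc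
      = Qc * (Pc * Scᵀ) * Qc + Qc * (Sc * Pc) * Qc - Qc * (Pc * Ccᵀ * Cc * Pc) * Qc
        + Qc * (1 : Matrix (Fin q) (Fin q) ℂ) * Qc := by
    simp only [Matrix.mul_add, Matrix.mul_sub, Matrix.add_mul, Matrix.sub_mul]
  have h0 : Scᵀ * Qc + Qc * Sc - Ccᵀ * Cc + Qc * Qc = 0 := by
    have h := congrArg (fun M => Qc * M * Qc) hricC
    rw [hexp2, e1, e2, e3, e4] at h
    simpa using h
  have hlyap : Qc * Sc + Scᵀ * Qc = Ccᵀ * Cc - Qc * Qc := by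
    rw [← sub_eq_zero]
    have habel : (Qc * Sc + Scᵀ * Qc) - (Ccᵀ * Cc - Qc * Qc)
        = Scᵀ * Qc + Qc * Sc - Ccᵀ * Cc + Qc * Qc := by abel
    rw [habel, h0]
  -- the matrix A and its eigenvector
  set Kc : Matrix (Fin q) (Fin q) ℂ := (P * C₀ᵀ * C₀).map Complex.ofReal with hKcdef
  have hKc : Kc = Pc * Ccᵀ * Cc := by
    rw [hKcdef, cmap_mul, cmap_mul, cmap_transpose]
  set A : Matrix (Fin q) (Fin q) ℂ := Sc - c • Kc with hA
  obtain ⟨v, hv0, hveq⟩ := Matrix.exists_mulVec_eq_zero_iff.2 hz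
  have hAv : A *ᵥ v = z • v := by
    rw [Matrix.sub_mulVec, Matrix.smul_mulVec, Matrix.one_mulVec, sub_eq_zero] at hveq
    exact hveq.symm
  -- Hermitian transposes
  have hPcH : Pcᴴ = Pc := by rw [hPc, cmap_conjTranspose, hPsymm]
  have hQcH : Qcᴴ = Qc := by
    rw [hQc, cmap_conjTranspose, Matrix.transpose_nonsing_inv, hPsymm]
  have hKcH : Kcᴴ = Ccᵀ * (Cc * Pc) := by
    rw [hKcdef, cmap_conjTranspose, Matrix.transpose_mul, Matrix.transpose_mul,
      Matrix.transpose_transpose, hPsymm, cmap_mul, cmap_mul, cmap_transpose]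
  have hAH : Aᴴ = Scᵀ - (starRingEnd ℂ) c • (Ccᵀ * (Cc * Pc)) := by
    rw [hA, Matrix.conjTranspose_sub, Matrix.conjTranspose_smul, hKcH, hSc,
      cmap_conjTranspose, cmap_transpose]
    rfl
  -- key matrix identity
  set X : Matrix (Fin q) (Fin q) ℂ := Ccᵀ * Cc with hX
  have hQA : Qc * A = Qc * Sc - c • X := by
    have h5 : Qc * (Pc * Ccᵀ * Cc) = Ccᵀ * Cc := by
      calc Qc * (Pc * Ccᵀ * Cc) = Qc * Pc * (Ccᵀ * Cc) := by simp only [Matrix.mul_assoc]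
        _ = Ccᵀ * Cc := by rw [hQP, Matrix.one_mul]
    rw [hA, Matrix.mul_sub, Matrix.mul_smul, hKc, h5, hX]
  have hAHQ : Aᴴ * Qc = Scᵀ * Qc - (starRingEnd ℂ) c • X := by
    have h5 : Ccᵀ * (Cc * Pc) * Qc = Ccᵀ * Cc := by
      calc Ccᵀ * (Cc * Pc) * Qc = Ccᵀ * (Cc * (Pc * Qc)) := by simp only [Matrix.mul_assoc]
        _ = Ccᵀ * Cc := by rw [hPQ, Matrix.mul_one]
    rw [hAH, Matrix.sub_mul, Matrix.smul_mul, h5, hX]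
  have hmat : Qc * A + Aᴴ * Qc = -(Qc * Qc) - (c + (starRingEnd ℂ) c - 1) • X := by
    rw [hQA, hAHQ, sub_smul, add_smul, one_smul]
    have : (Qc * Sc - c • X) + (Scᵀ * Qc - (starRingEnd ℂ) c • X)
        = (Qc * Sc + Scᵀ * Qc) - c • X - (starRingEnd ℂ) c • X := by abel
    rw [this, hlyap, hX]
    abel
  -- contract with the eigenvector
  set u : Fin q → ℂ := Qc *ᵥ v with hu
  have hvPu : Pc *ᵥ u = v := by
    rw [hu, Matrix.mulVec_mulVec, hPQ, Matrix.one_mulVec]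
  have hu0 : u ≠ 0 := by
    intro h
    rw [h, Matrix.mulVec_zero] at hvPu
    exact hv0 hvPu.symm
  have ht1 : star v ⬝ᵥ ((Qc * A) *ᵥ v) = z * (star v ⬝ᵥ u) := by
    rw [← Matrix.mulVec_mulVec, hAv, Matrix.mulVec_smul, dotProduct_smul, smul_eq_mul, hu]
  have ht2 : star v ⬝ᵥ ((Aᴴ * Qc) *ᵥ v) = (starRingEnd ℂ) z * (star v ⬝ᵥ u) := by
    rw [← Matrix.mulVec_mulVec, dotProduct_mulVec, ← Matrix.star_mulVec, hAv, star_smul,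
      smul_dotProduct, smul_eq_mul, hu]
    rfl
  -- quadratic forms as sums of squares
  set B : Matrix (Fin q) (Fin q) ℝ := CFC.sqrt P with hBdef
  have hBB : B * B = P := CFC.sqrt_mul_sqrt_self P hP.posSemidef.nonneg
  have hBsym : Bᵀ = B := by
    have h := (CFC.sqrt_nonneg P).posSemidef.1
    ext i j
    have h2 := congrFun (congrFun h i) j
    simpa [Matrix.conjTranspose_apply] using h2
  set Bc : Matrix (Fin q) (Fin q) ℂ := B.map Complex.ofReal with hBc
  have hBcH : Bcᴴ = Bc := by rw [hBc, cmap_conjTranspose, hBsym]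
  have hBcBc : Bc * Bc = Pc := by rw [hBc, hPc, ← cmap_mul, hBB]
  have hdetB : B.det ≠ 0 := by
    intro h
    have h2 : B.det * B.det = P.det := by rw [← Matrix.det_mul, hBB]
    rw [h, mul_zero] at h2
    exact hP.det_pos.ne h2
  have hdetBc : Bc.det ≠ 0 := by
    have hdet2 : Bc.det = (B.det : ℂ) := (RingHom.map_det Complex.ofRealHom B).symm
    rw [hdet2]
    exact Complex.ofReal_ne_zero.2 hdetB
  set w₀ : Fin q → ℂ := Bc *ᵥ u with hw₀
  have hw₀0 : w₀ ≠ 0 := by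
    intro h
    have := Matrix.exists_mulVec_eq_zero_iff.1 ⟨u, hu0, h⟩
    exact hdetBc this
  have halpha : star v ⬝ᵥ u = star w₀ ⬝ᵥ w₀ := by
    calc star v ⬝ᵥ u = star (Pc *ᵥ u) ⬝ᵥ u := by rw [hvPu]
      _ = (star u ᵥ* Pcᴴ) ⬝ᵥ u := by rw [Matrix.star_mulVec]
      _ = star u ⬝ᵥ (Pc *ᵥ u) := by rw [hPcH, ← dotProduct_mulVec]
      _ = star u ⬝ᵥ ((Bc * Bc) *ᵥ u) := by rw [hBcBc]
      _ = star u ⬝ᵥ (Bc *ᵥ (Bc *ᵥ u)) := by rw [← Matrix.mulVec_mulVec]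
      _ = (star u ᵥ* Bcᴴ) ⬝ᵥ (Bc *ᵥ u) := by rw [hBcH, dotProduct_mulVec]
      _ = star w₀ ⬝ᵥ w₀ := by rw [← Matrix.star_mulVec, hw₀]
  have hbeta : star v ⬝ᵥ ((Qc * Qc) *ᵥ v) = star u ⬝ᵥ u := by
    calc star v ⬝ᵥ ((Qc * Qc) *ᵥ v) = star v ⬝ᵥ (Qc *ᵥ (Qc *ᵥ v)) := by
          rw [Matrix.mulVec_mulVec]
      _ = (star v ᵥ* Qcᴴ) ⬝ᵥ (Qc *ᵥ v) := by rw [hQcH, dotProduct_mulVec]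
      _ = star u ⬝ᵥ u := by rw [← Matrix.star_mulVec, hu]
  set w₁ : Fin p₀ → ℂ := Cc *ᵥ v with hw₁
  have hCcH : Ccᴴ = Ccᵀ := by rw [hCc, cmap_conjTranspose, cmap_transpose]
  have hgamma : star v ⬝ᵥ (X *ᵥ v) = star w₁ ⬝ᵥ w₁ := by
    calc star v ⬝ᵥ (X *ᵥ v) = star v ⬝ᵥ (Ccᵀ *ᵥ (Cc *ᵥ v)) := by
          rw [hX, Matrix.mulVec_mulVec]
      _ = (star v ᵥ* Ccᴴ) ⬝ᵥ (Cc *ᵥ v) := by rw [hCcH, dotProduct_mulVec]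
      _ = star w₁ ⬝ᵥ w₁ := by rw [← Matrix.star_mulVec, hw₁]
  -- assemble
  have hE : (z + (starRingEnd ℂ) z) * (star v ⬝ᵥ u)
      = -(star u ⬝ᵥ u) - (c + (starRingEnd ℂ) c - 1) * (star w₁ ⬝ᵥ w₁) := by
    have hL : star v ⬝ᵥ ((Qc * A + Aᴴ * Qc) *ᵥ v)
        = (z + (starRingEnd ℂ) z) * (star v ⬝ᵥ u) := by
      rw [Matrix.add_mulVec, dotProduct_add, ht1, ht2]
      ring
    have hR : star v ⬝ᵥ ((-(Qc * Qc) - (c + (starRingEnd ℂ) c - 1) • X) *ᵥ v)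
        = -(star u ⬝ᵥ u) - (c + (starRingEnd ℂ) c - 1) * (star w₁ ⬝ᵥ w₁) := by
      rw [Matrix.sub_mulVec, Matrix.neg_mulVec, Matrix.smul_mulVec, dotProduct_sub,
        dotProduct_neg, dotProduct_smul, hbeta, hgamma, smul_eq_mul]
    rw [← hL, hmat, hR]
  have ha : 0 < ∑ i, Complex.normSq (w₀ i) := sum_normSq_pos hw₀0
  have hb : 0 < ∑ i, Complex.normSq (u i) := sum_normSq_pos hu0
  have hg : 0 ≤ ∑ i, Complex.normSq (w₁ i) := sum_normSq_nonneg w₁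
  rw [halpha, dot_star_self_eq, dot_star_self_eq, dot_star_self_eq, Complex.add_conj,
    Complex.add_conj] at hE
  have hreal : (2 * z.re) * (∑ i, Complex.normSq (w₀ i))
      = -(∑ i, Complex.normSq (u i)) - (2 * c.re - 1) * (∑ i, Complex.normSq (w₁ i)) := by
    exact_mod_cast hE
  nlinarith [mul_nonneg (sub_nonneg.2 (by linarith : (1:ℝ) ≤ 2 * c.re - 1)) hg, ha, hb]

end Helpers

/-- Distributed observer stability for a static graph: with the Riccati gain
`L₀ = P C₀ᵀ` and coupling `μ ≥ δ⁻¹` where `δ = min_i Re λ_i(H) > 0`, the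
matrix `(I_N ⊗ S) − μ (H ⊗ P C₀ᵀ C₀)` is Hurwitz. -/
theorem distributed_observer_static_hurwitz {N q p₀ : ℕ}
    (H : Matrix (Fin N) (Fin N) ℝ) (S : Matrix (Fin q) (Fin q) ℝ)
    (C₀ : Matrix (Fin p₀) (Fin q) ℝ)
    (hH : ∀ z ∈ spectrum ℂ (H.map Complex.ofReal), 0 < z.re)
    (δ : ℝ) (hδpos : 0 < δ)
    (hδ_lb : ∀ z ∈ spectrum ℂ (H.map Complex.ofReal), δ ≤ z.re)
    (hδ_attained : ∃ z ∈ spectrum ℂ (H.map Complex.ofReal), z.re = δ)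
    (hdet : Detectable C₀ S)
    (P : Matrix (Fin q) (Fin q) ℝ) (hPsymm : P.IsSymm) (hP : P.PosDef)
    (hric : P * Sᵀ + S * P - P * C₀ᵀ * C₀ * P + 1 = 0)
    (μ : ℝ) (hμ : δ⁻¹ ≤ μ) :
    IsHurwitzK (((1 : Matrix (Fin N) (Fin N) ℝ) ⊗ₖ S) - μ • (H ⊗ₖ (P * C₀ᵀ * C₀))) := by
  intro z hz
  have hdet0 : (z • (1 : Matrix (Fin N × Fin q) (Fin N × Fin q) ℂ)
      - ((((1 : Matrix (Fin N) (Fin N) ℝ) ⊗ₖ S)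
        - μ • (H ⊗ₖ (P * C₀ᵀ * C₀))).map Complex.ofReal)).det = 0 :=
    (mem_spectrum_iff_det _ _).1 hz
  set Sc : Matrix (Fin q) (Fin q) ℂ := S.map Complex.ofReal with hSc
  set Hc : Matrix (Fin N) (Fin N) ℂ := H.map Complex.ofReal with hHc
  set Kc : Matrix (Fin q) (Fin q) ℂ := (P * C₀ᵀ * C₀).map Complex.ofReal with hKc
  have hM : z • (1 : Matrix (Fin N × Fin q) (Fin N × Fin q) ℂ)
      - ((((1 : Matrix (Fin N) (Fin N) ℝ) ⊗ₖ S)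
        - μ • (H ⊗ₖ (P * C₀ᵀ * C₀))).map Complex.ofReal)
      = (1 : Matrix (Fin N) (Fin N) ℂ) ⊗ₖ (z • (1 : Matrix (Fin q) (Fin q) ℂ) - Sc)
        + Hc ⊗ₖ ((μ : ℂ) • Kc) := by
    rw [cmap_sub, cmap_kron, cmap_smul, cmap_kron, cmap_one, ← hSc, ← hHc, ← hKc,
      kron_sub', Matrix.kronecker_smul, Matrix.kronecker_smul,
      Matrix.one_kronecker_one]
    abel
  rw [hM] at hdet0
  obtain ⟨l, hlH, hlB⟩ := key_lemma q N Hc (z • (1 : Matrix (Fin q) (Fin q) ℂ) - Sc)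
    ((μ : ℂ) • Kc) (by
      have h2 : ((1 : Matrix (Fin N) (Fin N) ℂ)
          ⊗ₖ (z • (1 : Matrix (Fin q) (Fin q) ℂ) - Sc) + Hc ⊗ₖ ((μ : ℂ) • Kc))
          = (1 : Matrix (Fin N) (Fin N) ℂ) ⊗ₖ (z • (1 : Matrix (Fin q) (Fin q) ℂ) - Sc)
            + Hc ⊗ₖ ((μ : ℂ) • Kc) := rfl
      rw [← hdet0])
  have hlspec : l ∈ spectrum ℂ Hc := (mem_spectrum_iff_det Hc l).2 hlH
  have hlre : δ ≤ l.re := hδ_lb l hlspec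
  have hμpos : 0 < μ := lt_of_lt_of_le (inv_pos.2 hδpos) hμ
  set c : ℂ := (μ : ℂ) * l with hc
  have hcre : 1 ≤ c.re := by
    have h1 : c.re = μ * l.re := by
      rw [hc, Complex.mul_re]
      simp
    rw [h1, ← inv_mul_cancel₀ hδpos.ne']
    exact mul_le_mul hμ hlre hδpos.le hμpos.le
  have hmat : (z • (1 : Matrix (Fin q) (Fin q) ℂ) - Sc) + l • ((μ : ℂ) • Kc)
      = z • (1 : Matrix (Fin q) (Fin q) ℂ) - (Sc - c • Kc) := by
    rw [smul_smul, hc, mul_comm]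
    abel
  rw [hmat] at hlB
  exact lyap_lemma S C₀ P hPsymm hP hric c hcre z hlB
end
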